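/- arXiv:1706.00390 — 8 statements merged into one kernel-verified Lean document; each statement's English description precedes it below -/
import Mathlib

section
/- For two probability distributions p and q on a finite set with supp(p) ⊆ supp(q), the Rényi relative entropy S_α(p‖q) := (1/(α-1)) ln(∑_x p(x)^α q(x)^{1-α}) is monotonically nondecreasing in α on (0,1)∪(1,∞). -/
open Real Finset

/-- Rényi relative entropy `S_α(p‖q)` between two probability mass functions on a
finite type (sums effectively run over the support of `p`, since `p x ^ α = 0`
when `p x = 0` and `α > 0`). -/
noncomputable def renyiRelEntropy {X : Type*} [Fintype X] (p q : X → ℝ) (α : ℝ) : ℝ :=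
  (α - 1)⁻¹ * Real.log (∑ x, p x ^ α * q x ^ (1 - α))

/-- For probability distributions `p, q` with `supp p ⊆ supp q`, the Rényi relative
entropy is monotonically nondecreasing in the order parameter on `(0,1) ∪ (1,∞)`. -/
theorem renyiRelEntropy_mono {X : Type*} [Fintype X] (p q : X → ℝ)
    (hp0 : ∀ x, 0 ≤ p x) (hp1 : ∑ x, p x = 1)
    (hq0 : ∀ x, 0 ≤ q x) (hq1 : ∑ x, q x = 1)
    (hsupp : ∀ x, 0 < p x → 0 < q x)
    (α β : ℝ) (hα0 : 0 < α) (hα1 : α ≠ 1) (hβ0 : 0 < β) (hβ1 : β ≠ 1)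
    (hαβ : α ≤ β) :
    renyiRelEntropy p q α ≤ renyiRelEntropy p q β := by
  classical
  set S : Finset X := Finset.univ.filter (fun x => 0 < p x) with hSdef
  have hmemS : ∀ x ∈ S, 0 < p x := by intro x hx; simp [hSdef] at hx; exact hx
  have hmemQ : ∀ x ∈ S, 0 < q x := fun x hx => hsupp x (hmemS x hx)
  set z : X → ℝ := fun x => p x / q x with hzdef
  have hzpos : ∀ x ∈ S, 0 < z x := fun x hx => div_pos (hmemS x hx) (hmemQ x hx)
  have hsum1 : ∑ x ∈ S, p x = 1 := by
    rw [← hp1]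
    apply Finset.sum_subset (Finset.subset_univ _)
    intro x _ hx
    simp only [hSdef, Finset.mem_filter, Finset.mem_univ, true_and, not_lt] at hx
    linarith [hp0 x]
  have hSne : S.Nonempty := by
    by_contra h
    rw [Finset.not_nonempty_iff_eq_empty] at h
    rw [h] at hsum1; simp at hsum1
  set A : ℝ → ℝ := fun t => ∑ x ∈ S, p x * z x ^ t with hAdef
  have hApos : ∀ t, 0 < A t := fun t =>
    Finset.sum_pos (fun x hx => mul_pos (hmemS x hx) (Real.rpow_pos_of_pos (hzpos x hx) t)) hSne
  have key : ∀ γ : ℝ, 0 < γ → ∑ x, p x ^ γ * q x ^ (1 - γ) = A (γ - 1) := by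
    intro γ hγ
    rw [hAdef]
    rw [← Finset.sum_subset (Finset.subset_univ S)]
    · apply Finset.sum_congr rfl
      intro x hx
      have hp := hmemS x hx
      have hq := hmemQ x hx
      have h1 : p x ^ γ = p x * p x ^ (γ - 1) := by
        have := Real.rpow_add hp 1 (γ - 1)
        rw [show (1:ℝ) + (γ - 1) = γ by ring, Real.rpow_one] at this
        exact this
      have h2 : q x ^ (1 - γ) = (q x ^ (γ - 1))⁻¹ := by
        rw [show (1 - γ) = -(γ - 1) by ring, Real.rpow_neg hq.le]
      rw [h1, h2, hzdef]
      rw [Real.div_rpow hp.le hq.le]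
      field_simp
    · intro x _ hx
      simp only [hSdef, Finset.mem_filter, Finset.mem_univ, true_and, not_lt] at hx
      have hpx : p x = 0 := le_antisymm hx (hp0 x)
      rw [hpx, Real.zero_rpow hγ.ne', zero_mul]
  set L : ℝ := ∑ x ∈ S, p x * Real.log (z x) with hLdef
  have hJlog : ∀ t : ℝ, t * L ≤ Real.log (A t) := by
    intro t
    have hzt : ∀ x ∈ S, (0:ℝ) < z x ^ t := fun x hx => Real.rpow_pos_of_pos (hzpos x hx) t
    have h := Real.geom_mean_le_arith_mean_weighted S p (fun x => z x ^ t)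
      (fun x hx => (hmemS x hx).le) hsum1 (fun x hx => (hzt x hx).le)
    have hprod : (0:ℝ) < ∏ x ∈ S, (z x ^ t) ^ p x :=
      Finset.prod_pos fun x hx => Real.rpow_pos_of_pos (hzt x hx) _
    calc t * L = Real.log (∏ x ∈ S, (z x ^ t) ^ p x) := by
          rw [Real.log_prod (fun x hx => (Real.rpow_pos_of_pos (hzt x hx) _).ne')]
          rw [hLdef, Finset.mul_sum]
          apply Finset.sum_congr rfl
          intro x hx
          rw [Real.log_rpow (hzt x hx), Real.log_rpow (hzpos x hx)]
          ring
      _ ≤ Real.log (A t) := Real.log_le_log hprod h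
  have hJr : ∀ t r : ℝ, 1 ≤ r → A t ^ r ≤ A (t * r) := by
    intro t r hr
    have h := Real.rpow_arith_mean_le_arith_mean_rpow S p (fun x => z x ^ t)
      (fun x hx => (hmemS x hx).le) hsum1
      (fun x hx => (Real.rpow_pos_of_pos (hzpos x hx) t).le) hr
    calc A t ^ r ≤ ∑ x ∈ S, p x * (z x ^ t) ^ r := h
      _ = A (t * r) := Finset.sum_congr rfl fun x hx => by
          rw [← Real.rpow_mul (hzpos x hx).le]
  unfold renyiRelEntropy
  rw [key α hα0, key β hβ0]
  set a : ℝ := α - 1 with hadef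
  set b : ℝ := β - 1 with hbdef
  have ha0 : a ≠ 0 := sub_ne_zero.mpr hα1
  have hb0 : b ≠ 0 := sub_ne_zero.mpr hβ1
  have hab : a ≤ b := by rw [hadef, hbdef]; linarith
  rcases lt_or_gt_of_ne ha0 with haneg | hapos
  · rcases lt_or_gt_of_ne hb0 with hbneg | hbpos
    · -- a ≤ b < 0
      have hr : 1 ≤ a / b := by rw [le_div_iff_of_neg hbneg]; linarith
      have h := hJr b (a / b) hr
      rw [show b * (a / b) = a by field_simp] at h
      have hlog : (a / b) * Real.log (A b) ≤ Real.log (A a) := by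
        have h2 := Real.log_le_log (Real.rpow_pos_of_pos (hApos b) _) h
        rwa [Real.log_rpow (hApos b)] at h2
      have h3 : a⁻¹ * Real.log (A a) ≤ a⁻¹ * ((a / b) * Real.log (A b)) :=
        mul_le_mul_of_nonpos_left hlog (inv_nonpos.mpr haneg.le)
      have h4 : a⁻¹ * ((a / b) * Real.log (A b)) = b⁻¹ * Real.log (A b) := by
        field_simp
      linarith
    · -- a < 0 < b
      have h1 := hJlog a
      have h2 := hJlog b
      have h3 : a⁻¹ * Real.log (A a) ≤ a⁻¹ * (a * L) :=
        mul_le_mul_of_nonpos_left h1 (inv_nonpos.mpr haneg.le)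
      have h4 : a⁻¹ * (a * L) = L := by field_simp
      have h5 : b⁻¹ * (b * L) ≤ b⁻¹ * Real.log (A b) :=
        mul_le_mul_of_nonneg_left h2 (inv_nonneg.mpr hbpos.le)
      have h6 : b⁻¹ * (b * L) = L := by field_simp
      linarith
  · -- 0 < a ≤ b
    have hbpos : 0 < b := lt_of_lt_of_le hapos hab
    have hr : 1 ≤ b / a := (one_le_div hapos).mpr hab
    have h := hJr a (b / a) hr
    rw [show a * (b / a) = b by field_simp] at h
    have hlog : (b / a) * Real.log (A a) ≤ Real.log (A b) := by
      have h2 := Real.log_le_log (Real.rpow_pos_of_pos (hApos a) _) h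
      rwa [Real.log_rpow (hApos a)] at h2
    have h3 : b⁻¹ * ((b / a) * Real.log (A a)) ≤ b⁻¹ * Real.log (A b) :=
      mul_le_mul_of_nonneg_left hlog (inv_nonneg.mpr hbpos.le)
    have h4 : b⁻¹ * ((b / a) * Real.log (A a)) = a⁻¹ * Real.log (A a) := by
      field_simp
    linarith
end

section
/- For a pure state ρ = |φ⟩⟨φ| with |φ⟩ = ∑_i a_i |i⟩ and p_i = |a_i|², the Rényi relative entropy of coherence satisfies C_{r,α}(ρ) = (α/(α−1))·ln(∑_i p_i^{1/α}) for all α > 0, α ≠ 1, where C_{r,α}(ρ) := min over diagonal density matrices σ of (1/(α−1))·ln tr(ρ^α σ^{1−α}). -/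
open Matrix Finset

/-- Real power of a Hermitian matrix taken on its support (`0 ^ α = 0` for `α ≠ 0`),
via the spectral decomposition. -/
noncomputable def mrpow {n : Type*} [Fintype n] [DecidableEq n]
    (ρ : Matrix n n ℂ) (hρ : ρ.IsHermitian) (α : ℝ) : Matrix n n ℂ :=
  (hρ.eigenvectorUnitary : Matrix n n ℂ) *
    Matrix.diagonal (fun i => ((hρ.eigenvalues i ^ α : ℝ) : ℂ)) *
    star (hρ.eigenvectorUnitary : Matrix n n ℂ)

/-- For a pure state `ρ = |φ⟩⟨φ|` with `|φ⟩ = ∑ᵢ aᵢ|i⟩` and `pᵢ = |aᵢ|²`, the Rényi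
relative entropy of coherence, i.e. the minimum of `(α−1)⁻¹ ln tr(ρ^α σ^{1−α})` over
diagonal density matrices `σ` (whose support contains that of `ρ`), equals
`(α/(α−1)) ln ∑ᵢ pᵢ^{1/α}` for every `α > 0`, `α ≠ 1`. -/
theorem renyiCoherence_pure {d : ℕ} (a : Fin d → ℂ)
    (ha : ∑ i, ‖a i‖ ^ 2 = 1)
    (p : Fin d → ℝ) (hp : ∀ i, p i = ‖a i‖ ^ 2)
    (ρ : Matrix (Fin d) (Fin d) ℂ) (hρdef : ρ = Matrix.vecMulVec a (star a))
    (hρ : ρ.IsHermitian)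
    (α : ℝ) (hα0 : 0 < α) (hα1 : α ≠ 1) :
    IsLeast
      {v : ℝ | ∃ q : Fin d → ℝ, (∀ i, 0 ≤ q i) ∧ (∑ i, q i = 1) ∧
        (∀ i, p i ≠ 0 → q i ≠ 0) ∧
        v = (α - 1)⁻¹ *
          Real.log (Matrix.trace (mrpow ρ hρ α *
            Matrix.diagonal (fun i => ((q i ^ (1 - α) : ℝ) : ℂ)))).re}
      ((α / (α - 1)) * Real.log (∑ i, p i ^ α⁻¹)) := by
  classical
  have hα1' : α - 1 ≠ 0 := sub_ne_zero.mpr hα1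
  have h1α : (1 : ℝ) - α ≠ 0 := fun h => hα1 (by linarith)
  have hp0 : ∀ i, 0 ≤ p i := fun i => (hp i) ▸ sq_nonneg _
  have hpsum : ∑ i, p i = 1 := by rw [Finset.sum_congr rfl fun i _ => hp i]; exact ha
  -- mrpow ρ hρ α = ρ
  have hmr : mrpow ρ hρ α = ρ := by
    have hidem : ρ * ρ = ρ := by
      subst hρdef
      ext i j
      rw [Matrix.mul_apply]
      simp only [vecMulVec_apply, Pi.star_apply]
      have key : ∑ k, (starRingEnd ℂ) (a k) * a k = 1 := by
        have h1 : ∀ k, (starRingEnd ℂ) (a k) * a k = ((‖a k‖ ^ 2 : ℝ) : ℂ) := by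
          intro k
          rw [mul_comm, Complex.mul_conj, Complex.normSq_eq_norm_sq]
        rw [Finset.sum_congr rfl fun k _ => h1 k, ← Complex.ofReal_sum, ha, Complex.ofReal_one]
      calc ∑ k, a i * star (a k) * (a k * star (a j))
          = (a i * star (a j)) * ∑ k, (starRingEnd ℂ) (a k) * a k := by
            rw [Finset.mul_sum]; exact Finset.sum_congr rfl fun k _ => by
              simp only [RCLike.star_def]; ring
        _ = a i * star (a j) := by rw [key, mul_one]
    set U : Matrix (Fin d) (Fin d) ℂ := (hρ.eigenvectorUnitary : Matrix (Fin d) (Fin d) ℂ)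
      with hUdef
    have hU1 : U * star U = 1 := (Matrix.mem_unitaryGroup_iff).mp hρ.eigenvectorUnitary.2
    have hU2 : star U * U = 1 := (Matrix.mem_unitaryGroup_iff').mp hρ.eigenvectorUnitary.2
    set D : Matrix (Fin d) (Fin d) ℂ := Matrix.diagonal (RCLike.ofReal ∘ hρ.eigenvalues) with hDdef
    have hspec : ρ = U * D * star U := hρ.spectral_theorem
    have hD : D = star U * ρ * U := by
      rw [hspec, show star U * (U * D * star U) * U = (star U * U) * D * (star U * U) from by
        noncomm_ring, hU2, one_mul, mul_one]
    have hDD : D * D = D := by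
      rw [hD]
      calc star U * ρ * U * (star U * ρ * U)
          = star U * (ρ * (U * star U) * ρ) * U := by noncomm_ring
        _ = star U * ρ * U := by rw [hU1, mul_one, hidem]
    have eig01 : ∀ i, hρ.eigenvalues i = 0 ∨ hρ.eigenvalues i = 1 := by
      intro i
      have h := congrFun (congrFun hDD i) i
      rw [hDdef, Matrix.diagonal_mul_diagonal] at h
      simp only [Matrix.diagonal_apply_eq, Pi.mul_apply, Function.comp_apply] at h
      have h2 : hρ.eigenvalues i * hρ.eigenvalues i = hρ.eigenvalues i := by exact_mod_cast h
      rcases eq_or_ne (hρ.eigenvalues i) 0 with h0 | h0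
      · exact Or.inl h0
      · exact Or.inr (by field_simp at h2; nlinarith [h2])
    have h1 : (fun i => ((hρ.eigenvalues i ^ α : ℝ) : ℂ)) = (RCLike.ofReal ∘ hρ.eigenvalues) := by
      funext i
      rcases eig01 i with h | h <;> rw [Function.comp_apply, h] <;>
        simp [Real.zero_rpow hα0.ne', Real.one_rpow]
    rw [mrpow, h1]
    exact hspec.symm
  -- trace formula
  have htr : ∀ c : Fin d → ℝ,
      (Matrix.trace (ρ * Matrix.diagonal (fun i => ((c i : ℝ) : ℂ)))).re = ∑ i, p i * c i := by
    intro c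
    have h1 : Matrix.trace (ρ * Matrix.diagonal (fun i => ((c i : ℝ) : ℂ)))
        = ∑ i, ρ i i * ((c i : ℝ) : ℂ) := by
      simp [Matrix.trace, Matrix.diag, Matrix.mul_diagonal]
    have h2 : ∀ i, ρ i i = ((p i : ℝ) : ℂ) := by
      intro i
      rw [hρdef]
      simp only [vecMulVec_apply, Pi.star_apply]
      rw [show star (a i) = (starRingEnd ℂ) (a i) from rfl, Complex.mul_conj,
        Complex.normSq_eq_norm_sq, hp i]
    rw [h1, Finset.sum_congr rfl fun i _ => by rw [h2 i, ← Complex.ofReal_mul],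
      ← Complex.ofReal_sum, Complex.ofReal_re]
  -- positivity facts
  obtain ⟨i₀, hi₀⟩ : ∃ i, 0 < p i := by
    by_contra h
    push_neg at h
    have h0 : ∑ i, p i = 0 := Finset.sum_eq_zero fun i _ => le_antisymm (h i) (hp0 i)
    rw [hpsum] at h0; norm_num at h0
  set S : ℝ := ∑ i, p i ^ α⁻¹ with hSdef
  have hS : 0 < S := Finset.sum_pos' (fun i _ => Real.rpow_nonneg (hp0 i) _)
    ⟨i₀, Finset.mem_univ _, Real.rpow_pos_of_pos hi₀ _⟩
  -- key inequality for any feasible q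
  have key : ∀ q : Fin d → ℝ, (∀ i, 0 ≤ q i) → (∑ i, q i = 1) → (∀ i, p i ≠ 0 → q i ≠ 0) →
      (α / (α - 1)) * Real.log S ≤ (α - 1)⁻¹ * Real.log (∑ i, p i * q i ^ (1 - α)) := by
    intro q hq0 hq1 hqs
    set T : ℝ := ∑ i, p i * q i ^ (1 - α) with hTdef
    have hq0' : ∀ i, p i ≠ 0 → 0 < q i := fun i h => (hq0 i).lt_of_ne (Ne.symm (hqs i h))
    have hT : 0 < T := Finset.sum_pos'
      (fun i _ => mul_nonneg (hp0 i) (Real.rpow_nonneg (hq0 i) _))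
      ⟨i₀, Finset.mem_univ _, mul_pos hi₀ (Real.rpow_pos_of_pos (hq0' i₀ hi₀.ne') _)⟩
    set z : Fin d → ℝ := fun i => (p i / q i ^ α) ^ α⁻¹ with hzdef
    have hz0 : ∀ i, 0 ≤ z i := fun i => Real.rpow_nonneg (div_nonneg (hp0 i) (Real.rpow_nonneg (hq0 i) _)) _
    have hqz : ∀ i, q i * z i = p i ^ α⁻¹ := by
      intro i
      rcases eq_or_ne (q i) 0 with h | h
      · have hpz : p i = 0 := by by_contra hc; exact (hqs i hc) h
        rw [h, hpz, zero_mul, Real.zero_rpow (inv_ne_zero hα0.ne')]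
      · have hq' : 0 < q i := (hq0 i).lt_of_ne (Ne.symm h)
        rw [hzdef]
        simp only
        rw [Real.div_rpow (hp0 i) (Real.rpow_nonneg (hq0 i) _),
          Real.rpow_rpow_inv (hq0 i) hα0.ne', mul_comm, div_mul_cancel₀ _ h]
    have hqzα : ∀ i, q i * z i ^ α = p i * q i ^ (1 - α) := by
      intro i
      rcases eq_or_ne (q i) 0 with h | h
      · have hpz : p i = 0 := by by_contra hc; exact (hqs i hc) h
        rw [h, hpz, zero_mul, zero_mul]
      · have hq' : 0 < q i := (hq0 i).lt_of_ne (Ne.symm h)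
        rw [hzdef]
        simp only
        rw [Real.rpow_inv_rpow (div_nonneg (hp0 i) (Real.rpow_nonneg (hq0 i) _)) hα0.ne',
          Real.rpow_sub hq', Real.rpow_one]
        field_simp
    have hSz : S = ∑ i, q i * z i := by
      rw [hSdef]; exact Finset.sum_congr rfl fun i _ => (hqz i).symm
    have hTz : T = ∑ i, q i * z i ^ α := by
      rw [hTdef]; exact Finset.sum_congr rfl fun i _ => (hqzα i).symm
    rcases lt_or_gt_of_ne hα1 with hlt | hgt
    · -- α < 1
      have hinv : 1 ≤ α⁻¹ := by
        rw [← one_div, le_div_iff₀ hα0]; linarith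
      have hole : T ^ α⁻¹ ≤ S := by
        have h := Real.rpow_arith_mean_le_arith_mean_rpow Finset.univ q (fun i => z i ^ α)
          (fun i _ => hq0 i) hq1 (fun i _ => Real.rpow_nonneg (hz0 i) _) hinv
        rw [← hTz] at h
        calc T ^ α⁻¹ ≤ ∑ i, q i * (z i ^ α) ^ α⁻¹ := h
          _ = S := by
            rw [hSz]
            exact Finset.sum_congr rfl fun i _ => by
              rw [Real.rpow_rpow_inv (hz0 i) hα0.ne']
      have hTle : T ≤ S ^ α := by
        have h := Real.rpow_le_rpow (Real.rpow_nonneg hT.le _) hole hα0.le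
        rwa [Real.rpow_inv_rpow hT.le hα0.ne'] at h
      have hlog : Real.log T ≤ α * Real.log S := by
        rw [← Real.log_rpow hS]
        exact (Real.log_le_log_iff hT (Real.rpow_pos_of_pos hS α)).mpr hTle
      have hneg : (α - 1)⁻¹ ≤ 0 := le_of_lt (inv_neg''.mpr (by linarith))
      calc (α / (α - 1)) * Real.log S = (α - 1)⁻¹ * (α * Real.log S) := by ring
        _ ≤ (α - 1)⁻¹ * Real.log T := mul_le_mul_of_nonpos_left hlog hneg
    · -- α > 1
      have hSle : S ≤ T ^ α⁻¹ := by
        have h := Real.arith_mean_le_rpow_mean Finset.univ q z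
          (fun i _ => hq0 i) hq1 (fun i _ => hz0 i) hgt.le
        rw [← hSz, ← hTz, one_div] at h
        exact h
      have hTge : S ^ α ≤ T := by
        have h := Real.rpow_le_rpow hS.le hSle hα0.le
        rwa [Real.rpow_inv_rpow hT.le hα0.ne'] at h
      have hlog : α * Real.log S ≤ Real.log T := by
        rw [← Real.log_rpow hS]
        exact (Real.log_le_log_iff (Real.rpow_pos_of_pos hS α) hT).mpr hTge
      have hpos : (0 : ℝ) ≤ (α - 1)⁻¹ := le_of_lt (inv_pos.mpr (by linarith))
      calc (α / (α - 1)) * Real.log S = (α - 1)⁻¹ * (α * Real.log S) := by ring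
        _ ≤ (α - 1)⁻¹ * Real.log T := mul_le_mul_of_nonneg_left hlog hpos
  constructor
  · -- membership: optimal q
    refine ⟨fun i => p i ^ α⁻¹ / S, fun i => div_nonneg (Real.rpow_nonneg (hp0 i) _) hS.le,
      by rw [← Finset.sum_div, ← hSdef, div_self hS.ne'], fun i h => ?_, ?_⟩
    · exact ne_of_gt (div_pos (Real.rpow_pos_of_pos ((hp0 i).lt_of_ne (Ne.symm h)) _) hS)
    · rw [hmr, htr (fun i => (p i ^ α⁻¹ / S) ^ (1 - α))]
      have hterm : ∀ i, p i * (p i ^ α⁻¹ / S) ^ (1 - α) = p i ^ α⁻¹ * S ^ (α - 1) := by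
        intro i
        rw [Real.div_rpow (Real.rpow_nonneg (hp0 i) _) hS.le]
        have hpa : p i * (p i ^ α⁻¹) ^ (1 - α) = p i ^ α⁻¹ := by
          rcases eq_or_ne (p i) 0 with h | h
          · rw [h, Real.zero_rpow (inv_ne_zero hα0.ne'), Real.zero_rpow h1α, zero_mul]
          · have hp' : 0 < p i := (hp0 i).lt_of_ne (Ne.symm h)
            rw [← Real.rpow_mul (hp0 i)]
            have hexp : α⁻¹ * (1 - α) = α⁻¹ - 1 := by field_simp
            rw [hexp, show p i * p i ^ (α⁻¹ - 1) = p i ^ (1 : ℝ) * p i ^ (α⁻¹ - 1) from by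
              rw [Real.rpow_one], ← Real.rpow_add hp']
            norm_num
        rw [← mul_div_assoc, hpa, div_eq_mul_inv, ← Real.rpow_neg hS.le,
          show -(1 - α) = α - 1 from by ring]
      rw [Finset.sum_congr rfl fun i _ => hterm i, ← Finset.sum_mul, ← hSdef,
        show S * S ^ (α - 1) = S ^ (1 : ℝ) * S ^ (α - 1) from by rw [Real.rpow_one],
        ← Real.rpow_add hS, show (1 : ℝ) + (α - 1) = α from by ring, Real.log_rpow hS]
      field_simp
  · -- lower bound
    rintro v ⟨q, hq0, hq1, hqs, rfl⟩
    rw [hmr, htr (fun i => q i ^ (1 - α))]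
    exact key q hq0 hq1 hqs
end

section
/- For any density matrix ρ on ℂ^d and α ∈ (0,∞), α ≠ 1, the minimum of (1/(α−1))·ln tr(ρ^α σ^{1−α}) over diagonal density matrices σ equals (1/(α−1))·ln ‖(ρ^α)^{diag}‖_{1/α}, where (ρ^α)^{diag} is the diagonal matrix with entries (ρ^α)_{jj} and ‖D‖_{1/α} := (∑_j D_{jj}^{1/α})^α; the minimizer is σ = Q/tr(Q) with Q = [(ρ^α)^{diag}]^{1/α}. -/
open Matrix Finset ComplexOrder



lemma aux_value {d : ℕ} (a : Fin d → ℝ) (α : ℝ) (hα0 : 0 < α) (hα1 : α ≠ 1)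
    (ha : ∀ i, 0 ≤ a i) (hS : 0 < ∑ j, a j ^ α⁻¹) :
    ∑ i, a i * ((a i ^ α⁻¹ / ∑ j, a j ^ α⁻¹) ^ (1 - α))
      = (∑ j, a j ^ α⁻¹) ^ α := by
  set S := ∑ j, a j ^ α⁻¹ with hSdef
  have key : ∀ i, a i * ((a i ^ α⁻¹ / S) ^ (1 - α)) = a i ^ α⁻¹ * S ^ (α - 1) := by
    intro i
    rcases eq_or_lt_of_le (ha i) with h | h
    · rw [← h, Real.zero_rpow (inv_ne_zero hα0.ne'), zero_mul, zero_mul]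
    · have h1 : (a i ^ α⁻¹ / S) ^ (1 - α)
          = a i ^ (α⁻¹ * (1 - α)) / S ^ (1 - α) := by
        rw [Real.div_rpow (Real.rpow_nonneg (ha i) _) hS.le, ← Real.rpow_mul (ha i)]
      have h2 : a i * a i ^ (α⁻¹ * (1 - α)) = a i ^ α⁻¹ := by
        rw [Real.rpow_of_add_eq (ha i) (inv_ne_zero hα0.ne')
          (show (1 : ℝ) + α⁻¹ * (1 - α) = α⁻¹ by field_simp; ring), Real.rpow_one]
      rw [h1, mul_div_assoc', h2, div_eq_mul_inv, ← Real.rpow_neg hS.le, neg_sub]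
  rw [Finset.sum_congr rfl fun i _ => key i, ← Finset.sum_mul, ← hSdef,
    Real.rpow_of_add_eq hS.le hα0.ne' (show (1 : ℝ) + (α - 1) = α by ring),
    Real.rpow_one]


lemma aux_lower {d : ℕ} (a q : Fin d → ℝ) (α : ℝ) (hα0 : 0 < α) (hα1 : α ≠ 1)
    (ha : ∀ i, 0 ≤ a i) (hq : ∀ i, 0 ≤ q i) (hq1 : ∑ i, q i = 1)
    (hsupp : ∀ i, a i ≠ 0 → q i ≠ 0) (hex : ∃ j, a j ≠ 0) :
    (α - 1)⁻¹ * Real.log ((∑ j, a j ^ α⁻¹) ^ α)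
      ≤ (α - 1)⁻¹ * Real.log (∑ i, a i * q i ^ (1 - α)) := by
  obtain ⟨j, hj⟩ := hex
  have haj : 0 < a j := lt_of_le_of_ne (ha j) (Ne.symm hj)
  have hqj : 0 < q j := lt_of_le_of_ne (hq j) (Ne.symm (hsupp j hj))
  set S := ∑ j, a j ^ α⁻¹ with hSdef
  set T := ∑ i, a i * q i ^ (1 - α) with hTdef
  have hS0 : 0 < S := Finset.sum_pos' (fun i _ => Real.rpow_nonneg (ha i) _)
    ⟨j, mem_univ j, Real.rpow_pos_of_pos haj _⟩
  have hT0 : 0 < T := Finset.sum_pos'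
    (fun i _ => mul_nonneg (ha i) (Real.rpow_nonneg (hq i) _))
    ⟨j, mem_univ j, mul_pos haj (Real.rpow_pos_of_pos hqj _)⟩
  have hqz : ∀ i, q i = 0 → a i = 0 := by
    intro i h
    by_contra hne
    exact hsupp i hne h
  rcases lt_or_gt_of_ne hα1 with hlt | hgt
  · -- α < 1 : show T ≤ S ^ α
    have hpq : Real.HolderConjugate α⁻¹ (1 - α)⁻¹ :=
      Real.holderConjugate_iff.mpr ⟨(one_lt_inv₀ hα0).mpr hlt, by rw [inv_inv, inv_inv]; ring⟩
    have H := Real.inner_le_Lp_mul_Lq_of_nonneg (univ : Finset (Fin d)) hpq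
      (f := a) (g := fun i => q i ^ (1 - α))
      (fun i _ => ha i) (fun i _ => Real.rpow_nonneg (hq i) _)
    have e1 : ∑ i, (q i ^ (1 - α)) ^ ((1 - α)⁻¹) = 1 := by
      rw [Finset.sum_congr rfl fun i (_ : i ∈ univ) =>
        Real.rpow_rpow_inv (hq i) (sub_ne_zero_of_ne (Ne.symm hα1)), hq1]
    rw [e1, Real.one_rpow, mul_one, one_div, inv_inv] at H
    have hTS : T ≤ S ^ α := H
    have : Real.log T ≤ Real.log (S ^ α) := Real.log_le_log hT0 hTS
    have hneg : (α - 1)⁻¹ ≤ 0 := by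
      apply inv_nonpos.mpr; linarith
    exact mul_le_mul_of_nonpos_left this hneg
  · -- 1 < α : show S ^ α ≤ T
    have hpq : Real.HolderConjugate α (α / (α - 1)) := by
      refine Real.holderConjugate_iff.mpr ⟨hgt, ?_⟩
      have h1 : α - 1 ≠ 0 := by intro h; apply hα1; linarith
      field_simp
      ring
    have H := Real.inner_le_Lp_mul_Lq_of_nonneg (univ : Finset (Fin d)) hpq
      (f := fun i => (a i * q i ^ (1 - α)) ^ α⁻¹) (g := fun i => q i ^ (1 - α⁻¹))
      (fun i _ => Real.rpow_nonneg (mul_nonneg (ha i) (Real.rpow_nonneg (hq i) _)) _)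
      (fun i _ => Real.rpow_nonneg (hq i) _)
    have h1 : α - 1 ≠ 0 := by intro h; apply hα1; linarith
    have e1 : ∑ i, ((a i * q i ^ (1 - α)) ^ α⁻¹) * q i ^ (1 - α⁻¹) = S := by
      refine Finset.sum_congr rfl fun i _ => ?_
      rcases eq_or_lt_of_le (hq i) with h | h
      · rw [← h, hqz i h.symm]
        simp [Real.zero_rpow (inv_ne_zero hα0.ne')]
      · rw [Real.mul_rpow (ha i) (Real.rpow_nonneg (hq i) _),
          ← Real.rpow_mul (hq i), mul_assoc, ← Real.rpow_add h]
        rw [show (1 - α) * α⁻¹ + (1 - α⁻¹) = 0 by field_simp; ring, Real.rpow_zero, mul_one]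
    have e2 : ∑ i, ((a i * q i ^ (1 - α)) ^ α⁻¹) ^ α = T := by
      refine Finset.sum_congr rfl fun i _ => ?_
      exact Real.rpow_inv_rpow (mul_nonneg (ha i) (Real.rpow_nonneg (hq i) _)) hα0.ne'
    have e3 : ∑ i, (q i ^ (1 - α⁻¹)) ^ (α / (α - 1)) = 1 := by
      rw [Finset.sum_congr rfl fun i (_ : i ∈ univ) => by
        rw [← Real.rpow_mul (hq i),
          show (1 - α⁻¹) * (α / (α - 1)) = 1 by field_simp, Real.rpow_one], hq1]
    rw [e1, e2, e3, Real.one_rpow, mul_one] at H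
    have hST : S ^ α ≤ T := by
      have := Real.rpow_le_rpow (le_of_lt hS0) H hα0.le
      rwa [one_div, Real.rpow_inv_rpow hT0.le hα0.ne'] at this
    have : Real.log (S ^ α) ≤ Real.log T :=
      Real.log_le_log (Real.rpow_pos_of_pos hS0 _) hST
    have hpos : (0:ℝ) ≤ (α - 1)⁻¹ := by
      apply inv_nonneg.mpr; linarith
    exact mul_le_mul_of_nonneg_left this hpos


/-- For a density matrix `ρ` and `α ∈ (0,∞)`, `α ≠ 1`, the minimum of
`(α−1)⁻¹ ln tr(ρ^α σ^{1−α})` over diagonal density matrices `σ` (whose support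
contains that of `ρ`) equals `(α−1)⁻¹ ln ‖(ρ^α)^diag‖_{1/α}` where
`‖D‖_{1/α} = (∑ⱼ Dⱼⱼ^{1/α})^α`; the minimizer is `σ = Q/tr Q` with
`Q = [(ρ^α)^diag]^{1/α}`. -/
theorem renyiCoherence_closed_formula {d : ℕ}
    (ρ : Matrix (Fin d) (Fin d) ℂ) (hρ : ρ.PosSemidef) (htr : ρ.trace = 1)
    (α : ℝ) (hα0 : 0 < α) (hα1 : α ≠ 1) :
    IsLeast
      {v : ℝ | ∃ q : Fin d → ℝ, (∀ i, 0 ≤ q i) ∧ (∑ i, q i = 1) ∧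
        (∀ i, (ρ i i).re ≠ 0 → q i ≠ 0) ∧
        v = (α - 1)⁻¹ *
          Real.log (Matrix.trace (mrpow ρ hρ.1 α *
            Matrix.diagonal (fun i => ((q i ^ (1 - α) : ℝ) : ℂ)))).re}
      ((α - 1)⁻¹ *
        Real.log ((∑ j, ((mrpow ρ hρ.1 α) j j).re ^ α⁻¹) ^ α)) ∧
    -- the minimizer is `σ = Q / tr Q` with `Q = [(ρ^α)^diag]^{1/α}`
    (α - 1)⁻¹ *
        Real.log (Matrix.trace (mrpow ρ hρ.1 α *
          Matrix.diagonal (fun i =>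
            ((((((mrpow ρ hρ.1 α) i i).re ^ α⁻¹) /
                (∑ j, ((mrpow ρ hρ.1 α) j j).re ^ α⁻¹)) ^ (1 - α) : ℝ) : ℂ)))).re
      = (α - 1)⁻¹ *
        Real.log ((∑ j, ((mrpow ρ hρ.1 α) j j).re ^ α⁻¹) ^ α) := by
  classical
  set U := (hρ.1.eigenvectorUnitary : Matrix (Fin d) (Fin d) ℂ) with hU
  set lam := hρ.1.eigenvalues with hlam
  have entry : ∀ (f : Fin d → ℝ) (i),
      ((U * Matrix.diagonal (fun k => ((f k : ℝ) : ℂ)) * star U) i i).re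
      = ∑ k, f k * Complex.normSq (U i k) := by
    intro f i
    have : (U * Matrix.diagonal (fun k => ((f k : ℝ) : ℂ)) * star U) i i
        = ∑ k, ((f k * Complex.normSq (U i k) : ℝ) : ℂ) := by
      rw [Matrix.mul_apply]
      simp only [Matrix.mul_diagonal, Matrix.star_apply]
      refine Finset.sum_congr rfl fun k _ => ?_
      rw [mul_comm (U i k) _, mul_assoc, Complex.star_def, Complex.mul_conj]
      push_cast; ring
    rw [this, ← Complex.ofReal_sum]
    simp
  set a : Fin d → ℝ := fun i => ∑ k, lam k ^ α * Complex.normSq (U i k) with ha_def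
  have hA : ∀ i, ((mrpow ρ hρ.1 α) i i).re = a i := fun i =>
    entry (fun k => lam k ^ α) i
  have hann : ∀ i, 0 ≤ a i := fun i => Finset.sum_nonneg fun k _ =>
    mul_nonneg (Real.rpow_nonneg (hρ.eigenvalues_nonneg k) α) (Complex.normSq_nonneg _)
  have hrho : ∀ i, (ρ i i).re = ∑ k, lam k * Complex.normSq (U i k) := by
    intro i
    conv_lhs => rw [hρ.1.spectral_theorem]
    exact entry lam i
  have hiff : ∀ i, (ρ i i).re = 0 ↔ a i = 0 := by
    intro i
    rw [hrho i, ha_def]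
    rw [Finset.sum_eq_zero_iff_of_nonneg (fun k _ =>
      mul_nonneg (hρ.eigenvalues_nonneg k) (Complex.normSq_nonneg _)),
      Finset.sum_eq_zero_iff_of_nonneg (fun k _ =>
      mul_nonneg (Real.rpow_nonneg (hρ.eigenvalues_nonneg k) α) (Complex.normSq_nonneg _))]
    refine forall_congr' fun k => ?_
    simp only [mem_univ, forall_true_left, true_implies]
    rw [mul_eq_zero, mul_eq_zero, Real.rpow_eq_zero (hρ.eigenvalues_nonneg k) hα0.ne']
  have htrace : ∀ c : Fin d → ℝ,
      (Matrix.trace (mrpow ρ hρ.1 α * Matrix.diagonal (fun i => ((c i : ℝ) : ℂ)))).re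
      = ∑ i, a i * c i := by
    intro c
    rw [Matrix.trace, Complex.re_sum]
    refine Finset.sum_congr rfl fun i _ => ?_
    rw [Matrix.diag_apply, Matrix.mul_diagonal]
    rw [Complex.mul_re]
    simp only [Complex.ofReal_re, Complex.ofReal_im, mul_zero, sub_zero]
    rw [hA i]
  have hex : ∃ j, a j ≠ 0 := by
    by_contra h
    push_neg at h
    have hz : ∀ i, (ρ i i).re = 0 := fun i => (hiff i).mpr (h i)
    have h1 : (Matrix.trace ρ).re = 1 := by rw [htr]; simp
    rw [Matrix.trace, Complex.re_sum] at h1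
    simp only [Matrix.diag_apply] at h1
    rw [Finset.sum_eq_zero (fun i _ => hz i)] at h1
    exact one_ne_zero h1.symm
  simp only [hA]
  obtain ⟨j, hj⟩ := hex
  have hS0 : 0 < ∑ j, a j ^ α⁻¹ := Finset.sum_pos'
    (fun i _ => Real.rpow_nonneg (hann i) _)
    ⟨j, mem_univ j, Real.rpow_pos_of_pos (lt_of_le_of_ne (hann j) (Ne.symm hj)) _⟩
  have hmin : (Matrix.trace (mrpow ρ hρ.1 α * Matrix.diagonal (fun i =>
      (((a i ^ α⁻¹ / ∑ j, a j ^ α⁻¹) ^ (1 - α) : ℝ) : ℂ)))).re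
      = (∑ j, a j ^ α⁻¹) ^ α := by
    rw [htrace fun i => (a i ^ α⁻¹ / ∑ j, a j ^ α⁻¹) ^ (1 - α)]
    exact aux_value a α hα0 hα1 hann hS0
  refine ⟨⟨⟨fun i => a i ^ α⁻¹ / ∑ j, a j ^ α⁻¹, ?_, ?_, ?_, ?_⟩, ?_⟩, ?_⟩
  · exact fun i => div_nonneg (Real.rpow_nonneg (hann i) _) hS0.le
  · rw [← Finset.sum_div, div_self hS0.ne']
  · intro i hi
    have hai : a i ≠ 0 := fun h0 => hi ((hiff i).mpr h0)
    exact div_ne_zero ((Real.rpow_ne_zero (hann i) (inv_ne_zero hα0.ne')).mpr hai) hS0.ne'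
  · rw [hmin]
  · rintro v ⟨q, hq0, hq1, hqs, rfl⟩
    rw [htrace fun i => q i ^ (1 - α)]
    exact aux_lower a q α hα0 hα1 hann hq0 hq1
      (fun i hai => hqs i fun h => hai ((hiff i).mp h)) ⟨j, hj⟩
  · rw [hmin]
end

section
/- For any density matrix ρ on ℂ^d, the relative entropy of coherence C_r(ρ) := min over diagonal density matrices σ of S(ρ‖σ) equals S(ρ^{diag}) − S(ρ), where ρ^{diag} is the diagonal part of ρ, S is von Neumann entropy, and S(ρ‖σ) := tr(ρ ln ρ) − tr(ρ ln σ). -/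
open Matrix Finset ComplexOrder

/-- Gibbs' inequality (one-sided): `∑ p log q - ∑ p log p ≤ 0`. -/
lemma gibbs_aux {d : ℕ} (p q : Fin d → ℝ) (hp : ∀ i, 0 ≤ p i) (hq : ∀ i, 0 ≤ q i)
    (hps : ∑ i, p i = 1) (hqs : ∑ i, q i = 1)
    (hsupp : ∀ i, p i ≠ 0 → q i ≠ 0) :
    ∑ i, p i * Real.log (q i) ≤ ∑ i, p i * Real.log (p i) := by
  have key : ∀ i, p i * Real.log (q i) - p i * Real.log (p i) ≤ q i - p i := by
    intro i
    rcases eq_or_lt_of_le (hp i) with h0 | hpos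
    · simp [← h0, hq i]
    · have hqpos : 0 < q i := lt_of_le_of_ne (hq i) (Ne.symm (hsupp i (ne_of_gt hpos)))
      have hlog : Real.log (q i / p i) ≤ q i / p i - 1 :=
        Real.log_le_sub_one_of_pos (div_pos hqpos hpos)
      have := mul_le_mul_of_nonneg_left hlog (le_of_lt hpos)
      rw [Real.log_div (ne_of_gt hqpos) (ne_of_gt hpos)] at this
      calc p i * Real.log (q i) - p i * Real.log (p i)
          = p i * (Real.log (q i) - Real.log (p i)) := by ring
        _ ≤ p i * (q i / p i - 1) := this
        _ = q i - p i := by field_simp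
  have h : ∑ i, (p i * Real.log (q i) - p i * Real.log (p i)) ≤ ∑ i, (q i - p i) :=
    Finset.sum_le_sum (fun i _ => key i)
  rw [Finset.sum_sub_distrib, Finset.sum_sub_distrib, hps, hqs] at h
  linarith

/-- The relative entropy of coherence: the minimum over diagonal density matrices `σ`
(with support containing that of `ρ`, otherwise the relative entropy is `+∞`) of
`S(ρ‖σ) = tr(ρ ln ρ) − tr(ρ ln σ)` equals `S(ρ^diag) − S(ρ)`, where `S` is the
von Neumann entropy and logarithms are taken on the support. -/
theorem relEntropyCoherence_eq {d : ℕ}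
    (ρ : Matrix (Fin d) (Fin d) ℂ) (hρ : ρ.PosSemidef) (htr : ρ.trace = 1) :
    IsLeast
      {v : ℝ | ∃ q : Fin d → ℝ, (∀ i, 0 ≤ q i) ∧ (∑ i, q i = 1) ∧
        (∀ i, (ρ i i).re ≠ 0 → q i ≠ 0) ∧
        v = (∑ i, hρ.1.eigenvalues i * Real.log (hρ.1.eigenvalues i))
            - ∑ j, (ρ j j).re * Real.log (q j)}
      ((- ∑ j, (ρ j j).re * Real.log (ρ j j).re)
        - (- ∑ i, hρ.1.eigenvalues i * Real.log (hρ.1.eigenvalues i))) := by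
  have hdiag : ∀ i, 0 ≤ (ρ i i).re := by
    intro i
    have h := hρ.dotProduct_mulVec_nonneg (Pi.single i 1)
    have hd : dotProduct (star (Pi.single i 1)) (ρ *ᵥ Pi.single i 1) = ρ i i := by
      simp [dotProduct, Matrix.mulVec, Pi.single_apply, star, Finset.sum_ite_eq, Complex.ext_iff, apply_ite]
    rw [hd] at h
    exact_mod_cast (Complex.le_def.mp h).1
  have hsum : ∑ i, (ρ i i).re = 1 := by
    have : (ρ.trace).re = 1 := by rw [htr]; simp
    rw [Matrix.trace] at this
    simpa [Complex.re_sum] using this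
  constructor
  · refine ⟨fun i => (ρ i i).re, hdiag, hsum, fun i h => h, ?_⟩
    ring
  · rintro v ⟨q, hq0, hq1, hqsupp, rfl⟩
    have := gibbs_aux (fun i => (ρ i i).re) q hdiag hq0 hsum hq1 hqsupp
    beta_reduce at this
    linarith
end

section
/- For any density matrix ρ on ℂ^d supported on a subspace spanned by r of the reference basis vectors, the robustness of coherence C_R(ρ) := min{x ≥ 0 : ∃ density matrix τ with (ρ + xτ)/(1+x) diagonal} satisfies C_{l₁}(ρ)/(r−1) ≤ C_R(ρ) ≤ C_{l₁}(ρ), where C_{l₁}(ρ) = ∑_{j≠k}|ρ_{jk}| (assuming r ≥ 2 and ρ not diagonal for the lower bound). -/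
open Matrix Finset ComplexOrder

/-- The `l₁`-norm of coherence `C_{l₁}(ρ) = ∑_{j≠k} |ρ_{jk}|`. -/
noncomputable def l1Coherence {d : ℕ} (ρ : Matrix (Fin d) (Fin d) ℂ) : ℝ :=
  ∑ j, ∑ k ∈ Finset.univ \ {j}, ‖ρ j k‖

/-- The robustness of coherence
`C_R(ρ) = min {x ≥ 0 | ∃ density matrix τ, (ρ + xτ)/(1+x) is diagonal}`. -/
noncomputable def robustnessCoherence {d : ℕ} (ρ : Matrix (Fin d) (Fin d) ℂ) : ℝ :=
  sInf {x : ℝ | 0 ≤ x ∧ ∃ τ : Matrix (Fin d) (Fin d) ℂ, τ.PosSemidef ∧ τ.trace = 1 ∧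
    ∀ j k, j ≠ k → (((1 + x : ℝ) : ℂ)⁻¹ • (ρ + (x : ℂ) • τ)) j k = 0}

/-- Swap the two indices in an off-diagonal double sum. -/
lemma aux_sum_offdiag_comm {d : ℕ} (t : Finset (Fin d)) (f : Fin d → Fin d → ℝ) :
    ∑ j ∈ t, ∑ k ∈ t \ {j}, f j k = ∑ j ∈ t, ∑ k ∈ t \ {j}, f k j := by
  rw [Finset.sum_comm' (t' := t) (s' := fun k => t \ {k})]
  intro x y
  simp only [Finset.mem_sdiff, Finset.mem_singleton]
  tauto

/-- Nonneg complex times nonneg complex. -/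
lemma aux_cmul_nonneg {c z : ℂ} (hc : 0 ≤ c) (hz : 0 ≤ z) : 0 ≤ c * z := by
  rw [Complex.le_def] at *
  simp only [Complex.mul_re, Complex.mul_im, Complex.zero_re, Complex.zero_im] at *
  obtain ⟨hc1, hc2⟩ := hc
  obtain ⟨hz1, hz2⟩ := hz
  constructor
  · nlinarith
  · rw [← hc2, ← hz2]; ring

/-- Diagonal entries of a PSD complex matrix have nonnegative real part. -/
lemma aux_diag_re_nonneg {d : ℕ} {M : Matrix (Fin d) (Fin d) ℂ} (hM : M.PosSemidef)
    (j : Fin d) : 0 ≤ (M j j).re := by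
  have h := hM.dotProduct_mulVec_nonneg (Pi.single j (1:ℂ))
  rw [Complex.le_def] at h
  simp only [Matrix.mulVec_single, mul_one, dotProduct, Pi.star_apply,
    Pi.single_apply, apply_ite (star : ℂ → ℂ), star_one, star_zero, ite_mul, one_mul, zero_mul,
    Finset.sum_ite_eq', Finset.mem_univ, if_true, Complex.zero_re] at h
  simpa [Matrix.col_apply] using h.1

/-- Off-diagonal entries of a PSD matrix are bounded by the average of diagonal entries. -/
lemma aux_offdiag_bound {d : ℕ} {M : Matrix (Fin d) (Fin d) ℂ} (hM : M.PosSemidef)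
    (j k : Fin d) (hjk : j ≠ k) : 2 * ‖M j k‖ ≤ (M j j).re + (M k k).re := by
  by_cases hb : M j k = 0
  · have := aux_diag_re_nonneg hM j
    have := aux_diag_re_nonneg hM k
    simp [hb]; linarith
  · set b : ℂ := M j k with hbdef
    set t : ℝ := ‖b‖ with htdef
    have ht : 0 < t := norm_pos_iff.mpr hb
    set x : Fin d → ℂ := Pi.single j ((t : ℝ) : ℂ) + Pi.single k (-(starRingEnd ℂ b)) with hxdef
    have hkj : M k j = (starRingEnd ℂ) b := by
      have := hM.1
      have h2 : Mᴴ k j = M k j := by rw [this]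
      rw [← h2, Matrix.conjTranspose_apply]
      rfl
    have hsx : star x = Pi.single j ((t : ℝ) : ℂ) + Pi.single k (-b) := by
      funext i
      simp only [Pi.star_apply, hxdef, Pi.add_apply, Pi.single_apply]
      split_ifs with h1 h2 <;>
        simp_all [Complex.conj_ofReal, Complex.conj_conj]
    have hmv : M *ᵥ x = fun i => M i j * ((t : ℝ) : ℂ) + M i k * (-(starRingEnd ℂ b)) := by
      rw [hxdef, Matrix.mulVec_add, Matrix.mulVec_single, Matrix.mulVec_single]
      rfl
    have hβ : b * (starRingEnd ℂ) b = ((t : ℝ) : ℂ) ^ 2 := by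
      rw [Complex.mul_conj]
      rw [Complex.normSq_eq_norm_sq]
      push_cast
      rfl
    have hz : star x ⬝ᵥ (M *ᵥ x) = ((t : ℝ) : ℂ) ^ 2 * (M j j + M k k) - 2 * ((t : ℝ) : ℂ) ^ 3 := by
      rw [hsx, hmv, add_dotProduct, single_dotProduct, single_dotProduct,
        hkj]
      linear_combination (M k k - 2 * ((t : ℝ) : ℂ)) * hβ
    have h0 := hM.dotProduct_mulVec_nonneg x
    rw [hz, Complex.le_def] at h0
    have hre : (((t : ℝ) : ℂ) ^ 2 * (M j j + M k k) - 2 * ((t : ℝ) : ℂ) ^ 3).re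
        = t ^ 2 * ((M j j).re + (M k k).re) - 2 * t ^ 3 := by
      have : ((t : ℝ) : ℂ) ^ 2 * (M j j + M k k) - 2 * ((t : ℝ) : ℂ) ^ 3
          = ((t ^ 2 : ℝ) : ℂ) * (M j j + M k k) - (((2 * t ^ 3 : ℝ)) : ℂ) := by push_cast; ring
      rw [this, Complex.sub_re, Complex.re_ofReal_mul, Complex.add_re, Complex.ofReal_re]
    rw [hre] at h0
    have h1 : 0 ≤ t ^ 2 * ((M j j).re + (M k k).re) - 2 * t ^ 3 := by
      simpa using h0.1
    nlinarith [mul_pos ht ht, ht]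

/-- A Hermitian matrix whose diagonal entries equal the corresponding off-diagonal
absolute row sums is positive semidefinite. -/
lemma aux_diag_dom_psd {d : ℕ} (M : Matrix (Fin d) (Fin d) ℂ)
    (hherm : M.IsHermitian)
    (hdiag : ∀ j, M j j = ((∑ k ∈ Finset.univ \ {j}, ‖M j k‖ : ℝ) : ℂ)) :
    M.PosSemidef := by
  refine Matrix.PosSemidef.of_dotProduct_mulVec_nonneg hherm fun x => ?_
  set z := star x ⬝ᵥ M *ᵥ x with hzdef
  have hMsym : ∀ i l : Fin d, M l i = star (M i l) := by
    intro i l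
    conv_lhs => rw [← hherm.eq]
    rw [Matrix.conjTranspose_apply]
  have hstarz : star z = z := by
    rw [hzdef, ← Matrix.star_dotProduct_star, star_star, Matrix.star_mulVec, hherm.eq,
      ← Matrix.dotProduct_mulVec, dotProduct_comm]
  have key : ∀ i l : Fin d,
      -(‖M i l‖ * (Complex.normSq (x i) + Complex.normSq (x l)) / 2)
        ≤ ((starRingEnd ℂ) (x i) * M i l * x l).re := by
    intro i l
    have h1 : -‖(starRingEnd ℂ) (x i) * M i l * x l‖
        ≤ ((starRingEnd ℂ) (x i) * M i l * x l).re := by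
      have h := Complex.abs_re_le_norm ((starRingEnd ℂ) (x i) * M i l * x l)
      have := abs_le.mp h
      linarith [this.1]
    have h2 : ‖(starRingEnd ℂ) (x i) * M i l * x l‖ = ‖x i‖ * ‖M i l‖ * ‖x l‖ := by
      rw [norm_mul, norm_mul, RCLike.norm_conj]
    have h3 : Complex.normSq (x i) = ‖x i‖ ^ 2 := by
      rw [Complex.normSq_eq_norm_sq]
    have h4 : Complex.normSq (x l) = ‖x l‖ ^ 2 := by
      rw [Complex.normSq_eq_norm_sq]
    rw [h2] at h1
    rw [h3, h4]
    nlinarith [sq_nonneg (‖x i‖ - ‖x l‖), norm_nonneg (M i l), norm_nonneg (x i),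
      norm_nonneg (x l)]
  have hz2 : z = ∑ i, ∑ l, (starRingEnd ℂ) (x i) * M i l * x l := by
    rw [hzdef]
    simp only [dotProduct, Matrix.mulVec, Pi.star_apply, Finset.mul_sum]
    exact Finset.sum_congr rfl fun i _ => Finset.sum_congr rfl fun l _ => by
      rw [Complex.star_def]; ring
  have hdterm : ∀ i, ((starRingEnd ℂ) (x i) * M i i * x i).re
      = (∑ k ∈ Finset.univ \ {i}, ‖M i k‖) * Complex.normSq (x i) := by
    intro i
    rw [hdiag i]
    have : (starRingEnd ℂ) (x i) * ((∑ k ∈ Finset.univ \ {i}, ‖M i k‖ : ℝ) : ℂ) * x i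
        = (((∑ k ∈ Finset.univ \ {i}, ‖M i k‖) * Complex.normSq (x i) : ℝ) : ℂ) := by
      calc (starRingEnd ℂ) (x i) * ((∑ k ∈ Finset.univ \ {i}, ‖M i k‖ : ℝ) : ℂ) * x i
          = ((∑ k ∈ Finset.univ \ {i}, ‖M i k‖ : ℝ) : ℂ)
            * ((starRingEnd ℂ) (x i) * x i) := by ring
        _ = ((∑ k ∈ Finset.univ \ {i}, ‖M i k‖ : ℝ) : ℂ)
            * ((Complex.normSq (x i) : ℝ) : ℂ) := by rw [Complex.normSq_eq_conj_mul_self]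
        _ = _ := by push_cast; ring
    rw [this, Complex.ofReal_re]
  have hzre : z.re = ∑ i, ((∑ l ∈ Finset.univ \ {i},
      ((starRingEnd ℂ) (x i) * M i l * x l).re)
      + (∑ k ∈ Finset.univ \ {i}, ‖M i k‖) * Complex.normSq (x i)) := by
    rw [hz2, Complex.re_sum]
    refine Finset.sum_congr rfl fun i _ => ?_
    rw [Finset.sum_eq_sum_sdiff_singleton_add (Finset.mem_univ i), Complex.add_re,
      Complex.re_sum, hdterm i]
  have htotal : ∑ i, ∑ l ∈ Finset.univ \ {i},
        ‖M i l‖ * (Complex.normSq (x i) + Complex.normSq (x l)) / 2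
      = ∑ i, (∑ k ∈ Finset.univ \ {i}, ‖M i k‖) * Complex.normSq (x i) := by
    calc ∑ i, ∑ l ∈ Finset.univ \ {i},
          ‖M i l‖ * (Complex.normSq (x i) + Complex.normSq (x l)) / 2
        = ∑ i, ∑ l ∈ Finset.univ \ {i}, (‖M i l‖ * Complex.normSq (x i) / 2
            + ‖M i l‖ * Complex.normSq (x l) / 2) := by
          exact Finset.sum_congr rfl fun i _ => Finset.sum_congr rfl fun l _ => by ring
      _ = (∑ i, ∑ l ∈ Finset.univ \ {i}, ‖M i l‖ * Complex.normSq (x i) / 2)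
            + ∑ i, ∑ l ∈ Finset.univ \ {i}, ‖M i l‖ * Complex.normSq (x l) / 2 := by
          rw [← Finset.sum_add_distrib]
          exact Finset.sum_congr rfl fun i _ => Finset.sum_add_distrib
      _ = (∑ i, ∑ l ∈ Finset.univ \ {i}, ‖M i l‖ * Complex.normSq (x i) / 2)
            + ∑ i, ∑ l ∈ Finset.univ \ {i}, ‖M i l‖ * Complex.normSq (x i) / 2 := by
          congr 1
          rw [aux_sum_offdiag_comm Finset.univ
            (fun i l => ‖M i l‖ * Complex.normSq (x l) / 2)]
          exact Finset.sum_congr rfl fun i _ => Finset.sum_congr rfl fun l _ => by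
            rw [hMsym l i, norm_star]
      _ = ∑ i, (∑ k ∈ Finset.univ \ {i}, ‖M i k‖) * Complex.normSq (x i) := by
          rw [← Finset.sum_add_distrib]
          refine Finset.sum_congr rfl fun i _ => ?_
          rw [Finset.sum_mul, ← Finset.sum_add_distrib]
          exact Finset.sum_congr rfl fun l _ => by ring
  rw [Complex.le_def]
  constructor
  · simp only [Complex.zero_re]
    rw [hzre]
    have hlow : ∀ i : Fin d, (-(∑ l ∈ Finset.univ \ {i},
          ‖M i l‖ * (Complex.normSq (x i) + Complex.normSq (x l)) / 2))
          + (∑ k ∈ Finset.univ \ {i}, ‖M i k‖) * Complex.normSq (x i)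
        ≤ (∑ l ∈ Finset.univ \ {i}, ((starRingEnd ℂ) (x i) * M i l * x l).re)
          + (∑ k ∈ Finset.univ \ {i}, ‖M i k‖) * Complex.normSq (x i) := by
      intro i
      apply add_le_add_left
      rw [← Finset.sum_neg_distrib]
      exact Finset.sum_le_sum fun l _ => key i l
    calc (0 : ℝ) = ∑ i, ((-(∑ l ∈ Finset.univ \ {i},
            ‖M i l‖ * (Complex.normSq (x i) + Complex.normSq (x l)) / 2))
            + (∑ k ∈ Finset.univ \ {i}, ‖M i k‖) * Complex.normSq (x i)) := by
          rw [Finset.sum_add_distrib, Finset.sum_neg_distrib, htotal]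
          ring
      _ ≤ _ := Finset.sum_le_sum fun i _ => hlow i
  · have h := congrArg Complex.im hstarz
    rw [show (star z) = (starRingEnd ℂ) z from rfl, Complex.conj_im] at h
    simp only [Complex.zero_im]
    linarith


/-- For a density matrix `ρ` supported on a subspace spanned by `r ≥ 2` reference
basis vectors (and not diagonal for the lower bound), the robustness of coherence
satisfies `C_{l₁}(ρ)/(r−1) ≤ C_R(ρ) ≤ C_{l₁}(ρ)`. -/
theorem robustness_coherence_bounds {d : ℕ}
    (ρ : Matrix (Fin d) (Fin d) ℂ) (hρ : ρ.PosSemidef) (htr : ρ.trace = 1)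
    (r : ℕ) (hr : 2 ≤ r) (s : Finset (Fin d)) (hs : s.card = r)
    (hsupp : ∀ j k, (j ∉ s ∨ k ∉ s) → ρ j k = 0)
    (hnd : ∃ j k, j ≠ k ∧ ρ j k ≠ 0) :
    l1Coherence ρ / (r - 1 : ℝ) ≤ robustnessCoherence ρ ∧
    robustnessCoherence ρ ≤ l1Coherence ρ := by
  obtain ⟨j₀, k₀, hjk₀, hρ₀⟩ := hnd
  set S : Set ℝ := {x : ℝ | 0 ≤ x ∧ ∃ τ : Matrix (Fin d) (Fin d) ℂ, τ.PosSemidef ∧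
    τ.trace = 1 ∧
    ∀ j k, j ≠ k → (((1 + x : ℝ) : ℂ)⁻¹ • (ρ + (x : ℂ) • τ)) j k = 0} with hSdef
  have hrob : robustnessCoherence ρ = sInf S := rfl
  set L := l1Coherence ρ with hLdef
  have hLeq : L = ∑ j, ∑ k ∈ Finset.univ \ {j}, ‖ρ j k‖ := rfl
  -- positivity of L
  have hL1 : ‖ρ j₀ k₀‖ ≤ ∑ k ∈ Finset.univ \ {j₀}, ‖ρ j₀ k‖ :=
    Finset.single_le_sum (fun _ _ => norm_nonneg _)
      (by simp [Finset.mem_sdiff, Ne.symm hjk₀])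
  have hL2 : ∑ k ∈ Finset.univ \ {j₀}, ‖ρ j₀ k‖ ≤ L := by
    rw [hLeq]
    exact Finset.single_le_sum (f := fun j => ∑ k ∈ Finset.univ \ {j}, ‖ρ j k‖)
      (fun j _ => Finset.sum_nonneg fun _ _ => norm_nonneg _) (Finset.mem_univ j₀)
  have hLpos : 0 < L := lt_of_lt_of_le (norm_pos_iff.mpr hρ₀) (hL1.trans hL2)
  have hLne : ((L : ℝ) : ℂ) ≠ 0 := Complex.ofReal_ne_zero.mpr hLpos.ne'
  -- the auxiliary matrix M
  set M : Matrix (Fin d) (Fin d) ℂ := Matrix.of (fun j k =>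
    if j = k then ((∑ k' ∈ Finset.univ \ {j}, ‖ρ j k'‖ : ℝ) : ℂ) else -ρ j k) with hMdef
  have hMapp : ∀ j k, M j k =
      if j = k then ((∑ k' ∈ Finset.univ \ {j}, ‖ρ j k'‖ : ℝ) : ℂ) else -ρ j k :=
    fun j k => rfl
  have hρsym : ∀ j k, ρ k j = star (ρ j k) := by
    intro j k
    conv_lhs => rw [← hρ.1.eq]
    rw [Matrix.conjTranspose_apply]
  have hMherm : M.IsHermitian := by
    have : Mᴴ = M := by
      ext j k
      rw [Matrix.conjTranspose_apply, hMapp, hMapp]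
      by_cases hjk : j = k
      · subst hjk
        simp [Complex.star_def, Complex.conj_ofReal]
      · rw [if_neg (fun h => hjk h.symm), if_neg hjk, star_neg, ← hρsym]
    exact this
  have hMnorm : ∀ j, ∑ k ∈ Finset.univ \ {j}, ‖M j k‖
      = ∑ k ∈ Finset.univ \ {j}, ‖ρ j k‖ := by
    intro j
    refine Finset.sum_congr rfl fun k hk => ?_
    rw [Finset.mem_sdiff, Finset.mem_singleton] at hk
    rw [hMapp, if_neg (fun h => hk.2 h.symm), norm_neg]
  have hMdiag : ∀ j, M j j = ((∑ k ∈ Finset.univ \ {j}, ‖M j k‖ : ℝ) : ℂ) := by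
    intro j
    rw [hMapp, if_pos rfl, hMnorm j]
  have hMpsd : M.PosSemidef := aux_diag_dom_psd M hMherm hMdiag
  have hMtr : M.trace = ((L : ℝ) : ℂ) := by
    rw [Matrix.trace, hLeq]
    push_cast
    refine Finset.sum_congr rfl fun j _ => ?_
    rw [Matrix.diag_apply, hMdiag j, hMnorm j]
    push_cast
    rfl
  -- the density matrix τ
  set τ : Matrix (Fin d) (Fin d) ℂ := ((L : ℝ) : ℂ)⁻¹ • M with hτdef
  have hτpsd : τ.PosSemidef := by
    refine Matrix.PosSemidef.of_dotProduct_mulVec_nonneg ?_ ?_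
    · have : τᴴ = τ := by
        rw [hτdef, Matrix.conjTranspose_smul, hMherm.eq]
        congr 1
        rw [Complex.star_def, map_inv₀, Complex.conj_ofReal]
      exact this
    · intro y
      rw [hτdef, Matrix.smul_mulVec, dotProduct_smul, smul_eq_mul]
      have hinv : (0 : ℂ) ≤ ((L : ℝ) : ℂ)⁻¹ := by
        rw [← Complex.ofReal_inv]
        rw [Complex.le_def]
        simp [inv_nonneg.mpr hLpos.le]
      exact aux_cmul_nonneg hinv (hMpsd.dotProduct_mulVec_nonneg y)
  have hτtr : τ.trace = 1 := by
    rw [hτdef, Matrix.trace_smul, hMtr, smul_eq_mul, inv_mul_cancel₀ hLne]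
  have hmem : L ∈ S := by
    refine ⟨hLpos.le, τ, hτpsd, hτtr, fun j k hjk => ?_⟩
    have hτjk : ((L : ℝ) : ℂ) • τ j k = -ρ j k := by
      rw [hτdef, Matrix.smul_apply, smul_eq_mul, smul_eq_mul, ← mul_assoc,
        mul_inv_cancel₀ hLne, one_mul, hMapp, if_neg hjk]
    simp only [Matrix.smul_apply, Matrix.add_apply, smul_eq_mul]
    rw [show ((L : ℝ) : ℂ) * τ j k = -ρ j k from hτjk]
    ring
  have hbdd : BddBelow S := ⟨0, fun x hx => hx.1⟩
  constructor
  · -- lower bound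
    rw [hrob]
    refine le_csInf ⟨L, hmem⟩ fun x hx => ?_
    obtain ⟨hx0, τ', hpsd, htr', hoff⟩ := hx
    have h1x : ((1 + x : ℝ) : ℂ) ≠ 0 :=
      Complex.ofReal_ne_zero.mpr (by linarith)
    have heq : ∀ j k, j ≠ k → ρ j k = -((x : ℝ) : ℂ) * τ' j k := by
      intro j k hjk
      have h := hoff j k hjk
      simp only [Matrix.smul_apply, Matrix.add_apply, smul_eq_mul] at h
      rcases mul_eq_zero.mp h with h' | h'
      · exact absurd h' (inv_ne_zero h1x)
      · linear_combination h'
    have hxpos : 0 < x := by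
      rcases hx0.lt_or_eq with h | h
      · exact h
      · exfalso
        apply hρ₀
        rw [heq j₀ k₀ hjk₀, ← h]
        simp
    have hxC : ((x : ℝ) : ℂ) ≠ 0 := Complex.ofReal_ne_zero.mpr hxpos.ne'
    have hnorm : ∀ j k, j ≠ k → ‖ρ j k‖ = x * ‖τ' j k‖ := by
      intro j k hjk
      rw [heq j k hjk, norm_mul, norm_neg, Complex.norm_real, Real.norm_eq_abs,
        abs_of_pos hxpos]
    have hτz : ∀ j k, j ≠ k → (j ∉ s ∨ k ∉ s) → τ' j k = 0 := by
      intro j k hjk hout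
      have h := heq j k hjk
      rw [hsupp j k hout] at h
      rcases mul_eq_zero.mp h.symm with h' | h'
      · exact absurd (neg_eq_zero.mp h') hxC
      · exact h'
    have hLx : L = x * ∑ j, ∑ k ∈ Finset.univ \ {j}, ‖τ' j k‖ := by
      rw [hLeq, Finset.mul_sum]
      refine Finset.sum_congr rfl fun j _ => ?_
      rw [Finset.mul_sum]
      refine Finset.sum_congr rfl fun k hk => ?_
      rw [Finset.mem_sdiff, Finset.mem_singleton] at hk
      exact hnorm j k (fun h => hk.2 h.symm)
    have hrestrict : ∑ j, ∑ k ∈ Finset.univ \ {j}, ‖τ' j k‖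
        = ∑ j ∈ s, ∑ k ∈ s \ {j}, ‖τ' j k‖ := by
      rw [← Finset.sum_subset (Finset.subset_univ s) (fun j _ hj =>
        Finset.sum_eq_zero fun k hk => by
          rw [Finset.mem_sdiff, Finset.mem_singleton] at hk
          rw [hτz j k (fun h => hk.2 h.symm) (Or.inl hj), norm_zero])]
      refine Finset.sum_congr rfl fun j hj => ?_
      refine (Finset.sum_subset (fun k hk => ?_) (fun k hk hk' => ?_)).symm
      · rw [Finset.mem_sdiff, Finset.mem_singleton] at hk ⊢
        exact ⟨Finset.mem_univ k, hk.2⟩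
      · rw [Finset.mem_sdiff, Finset.mem_singleton] at hk hk'
        push_neg at hk'
        have hks : k ∉ s := fun hkm => hk.2 (hk' hkm)
        rw [hτz j k (fun h => hk.2 h.symm) (Or.inr hks), norm_zero]
    have htrre : ∑ j, (τ' j j).re = 1 := by
      have h := congrArg Complex.re htr'
      rw [Matrix.trace] at h
      rw [Complex.re_sum] at h
      simpa using h
    have hdiagsum : ∑ j ∈ s, (τ' j j).re ≤ 1 := by
      rw [← htrre]
      exact Finset.sum_le_sum_of_subset_of_nonneg (Finset.subset_univ s)
        (fun j _ _ => aux_diag_re_nonneg hpsd j)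
    have hr1 : (1 : ℝ) ≤ (r : ℝ) - 1 := by
      have : (2 : ℝ) ≤ (r : ℝ) := by exact_mod_cast hr
      linarith
    have hcard : ∀ j ∈ s, ((s \ {j}).card : ℝ) = (r : ℝ) - 1 := by
      intro j hj
      rw [Finset.card_sdiff_of_subset (Finset.singleton_subset_iff.mpr hj), Finset.card_singleton, hs]
      have : 1 ≤ r := by omega
      push_cast [Nat.cast_sub this]
      ring
    have hT : ∑ j ∈ s, ∑ k ∈ s \ {j}, ‖τ' j k‖ ≤ (r : ℝ) - 1 := by
      calc ∑ j ∈ s, ∑ k ∈ s \ {j}, ‖τ' j k‖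
          ≤ ∑ j ∈ s, ∑ k ∈ s \ {j}, ((τ' j j).re + (τ' k k).re) / 2 := by
            refine Finset.sum_le_sum fun j _ => Finset.sum_le_sum fun k hk => ?_
            rw [Finset.mem_sdiff, Finset.mem_singleton] at hk
            have := aux_offdiag_bound hpsd j k (fun h => hk.2 h.symm)
            linarith
        _ = ((r : ℝ) - 1) * ∑ j ∈ s, (τ' j j).re := by
            calc ∑ j ∈ s, ∑ k ∈ s \ {j}, ((τ' j j).re + (τ' k k).re) / 2
                = ∑ j ∈ s, ∑ k ∈ s \ {j}, ((τ' j j).re / 2 + (τ' k k).re / 2) := by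
                  exact Finset.sum_congr rfl fun j _ => Finset.sum_congr rfl fun k _ => by
                    ring
              _ = (∑ j ∈ s, ∑ k ∈ s \ {j}, (τ' j j).re / 2)
                  + ∑ j ∈ s, ∑ k ∈ s \ {j}, (τ' k k).re / 2 := by
                  rw [← Finset.sum_add_distrib]
                  exact Finset.sum_congr rfl fun j _ => Finset.sum_add_distrib
              _ = (∑ j ∈ s, ∑ k ∈ s \ {j}, (τ' j j).re / 2)
                  + ∑ j ∈ s, ∑ k ∈ s \ {j}, (τ' j j).re / 2 := by
                  congr 1
                  exact aux_sum_offdiag_comm s (fun j k => (τ' k k).re / 2)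
              _ = ∑ j ∈ s, ((s \ {j}).card : ℝ) * (τ' j j).re := by
                  rw [← Finset.sum_add_distrib]
                  refine Finset.sum_congr rfl fun j _ => ?_
                  rw [Finset.sum_const, nsmul_eq_mul]
                  ring
              _ = ((r : ℝ) - 1) * ∑ j ∈ s, (τ' j j).re := by
                  rw [Finset.mul_sum]
                  exact Finset.sum_congr rfl fun j hj => by rw [hcard j hj]
        _ ≤ ((r : ℝ) - 1) * 1 := by
            apply mul_le_mul_of_nonneg_left hdiagsum (by linarith)
        _ = (r : ℝ) - 1 := mul_one _
    have hLle : L ≤ x * ((r : ℝ) - 1) := by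
      rw [hLx, hrestrict]
      exact mul_le_mul_of_nonneg_left hT hx0
    rw [div_le_iff₀ (by linarith : (0 : ℝ) < (r : ℝ) - 1)]
    linarith
  · -- upper bound
    rw [hrob]
    exact csInf_le hbdd hmem
end

section
/- Let ρ be a density matrix on ℂ^d that commutes with its diagonal part ρ^{diag} and satisfies Π_ρ ρ^{diag} = c·ρ for some constant c > 0, where Π_ρ is the projector onto the support of ρ. Then for every α ∈ (0,∞), α ≠ 1, the Rényi relative entropy of coherence C_{r,α}(ρ) := (1/(α−1))·ln ‖(ρ^α)^{diag}‖_{1/α} equals −ln c. -/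
open Matrix Finset ComplexOrder

lemma conj_entry {n : Type*} [Fintype n] [DecidableEq n] (U : Matrix n n ℂ) (g : n → ℂ) (j : n) :
    (U * Matrix.diagonal g * star U) j j = ∑ i, g i * (Complex.normSq (U j i) : ℂ) := by
  rw [Matrix.mul_apply]
  refine Finset.sum_congr rfl fun i _ => ?_
  rw [Matrix.mul_diagonal, Matrix.star_apply, RCLike.star_def]
  rw [mul_comm (U j i) (g i), mul_assoc, Complex.mul_conj]

lemma scalar_aux {ι : Type*} [Fintype ι] (lam nn : ι → ℝ) (hlam : ∀ i, 0 ≤ lam i)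
    (hnn : ∀ i, 0 ≤ nn i) (c α : ℝ) (hc : 0 < c) (hα0 : 0 < α)
    (p : ℝ) (hp : p = ∑ i, lam i * nn i)
    (H1 : ∀ i, lam i ≠ 0 → nn i ≠ 0 → lam i * c = p)
    (H2 : p ≠ 0 → (∑ i, (if lam i = 0 then (0:ℝ) else 1) * nn i) = c) :
    ∑ i, lam i ^ α * nn i = c ^ (1 - α) * p ^ α := by
  by_cases hp0 : p = 0
  · have hterm : ∀ i ∈ Finset.univ, lam i ^ α * nn i = 0 := by
      intro i _
      have h0 : lam i * nn i = 0 := by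
        have := Finset.sum_eq_zero_iff_of_nonneg (fun i _ => mul_nonneg (hlam i) (hnn i))
          |>.mp (hp ▸ hp0.symm).symm
        exact this i (Finset.mem_univ i)
      rcases mul_eq_zero.mp h0 with h | h
      · rw [h, Real.zero_rpow (ne_of_gt hα0), zero_mul]
      · rw [h, mul_zero]
    rw [Finset.sum_eq_zero hterm, hp0, Real.zero_rpow (ne_of_gt hα0), mul_zero]
  · have hppos : 0 < p := lt_of_le_of_ne (hp ▸ Finset.sum_nonneg fun i _ =>
      mul_nonneg (hlam i) (hnn i)) (Ne.symm hp0)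
    have hterm : ∀ i, lam i ^ α * nn i = (p / c) ^ α * ((if lam i = 0 then (0:ℝ) else 1) * nn i) := by
      intro i
      by_cases hl : lam i = 0
      · simp [hl, Real.zero_rpow (ne_of_gt hα0)]
      · by_cases hn : nn i = 0
        · simp [hn]
        · have hpc : lam i = p / c := by
            rw [eq_div_iff (ne_of_gt hc)]; exact H1 i hl hn
          rw [if_neg hl, one_mul, hpc]
    rw [Finset.sum_congr rfl fun i _ => hterm i, ← Finset.mul_sum, H2 hp0]
    rw [Real.div_rpow hppos.le hc.le]
    rw [Real.rpow_sub hc, Real.rpow_one]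
    field_simp

/-- The orthogonal projector onto the support (range) of a Hermitian matrix. -/
noncomputable def suppProj {n : Type*} [Fintype n] [DecidableEq n]
    (ρ : Matrix n n ℂ) (hρ : ρ.IsHermitian) : Matrix n n ℂ :=
  (hρ.eigenvectorUnitary : Matrix n n ℂ) *
    Matrix.diagonal (fun i => if hρ.eigenvalues i = 0 then (0 : ℂ) else 1) *
    star (hρ.eigenvectorUnitary : Matrix n n ℂ)

/-- If a density matrix `ρ` commutes with its diagonal part `ρ^diag` and satisfies
`Π_ρ ρ^diag = c ρ` with `c > 0`, where `Π_ρ` projects onto the support of `ρ`, then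
its Rényi relative entropy of coherence
`C_{r,α}(ρ) = (α−1)⁻¹ ln ‖(ρ^α)^diag‖_{1/α}` equals `−ln c` for all `α ∈ (0,∞)`, `α ≠ 1`. -/
theorem renyiCoherence_of_prop_diag {d : ℕ}
    (ρ : Matrix (Fin d) (Fin d) ℂ) (hρ : ρ.PosSemidef) (htr : ρ.trace = 1)
    (ρdiag : Matrix (Fin d) (Fin d) ℂ)
    (hdiag : ρdiag = Matrix.diagonal (fun j => ρ j j))
    (hcomm : ρ * ρdiag = ρdiag * ρ)
    (c : ℝ) (hc : 0 < c)
    (hprop : suppProj ρ hρ.1 * ρdiag = (c : ℂ) • ρ)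
    (α : ℝ) (hα0 : 0 < α) (hα1 : α ≠ 1) :
    (α - 1)⁻¹ * Real.log ((∑ j, ((mrpow ρ hρ.1 α) j j).re ^ α⁻¹) ^ α)
      = - Real.log c := by
  classical
  set U : Matrix (Fin d) (Fin d) ℂ := (hρ.1.eigenvectorUnitary : Matrix (Fin d) (Fin d) ℂ) with hU
  set lam : Fin d → ℝ := hρ.1.eigenvalues with hlamdef
  have hlam : ∀ i, 0 ≤ lam i := hρ.eigenvalues_nonneg
  have hUstar : star U * U = 1 := (hρ.1.eigenvectorUnitary).prop.1
  have hspec : ρ = U * Matrix.diagonal (fun i => (lam i : ℂ)) * star U := by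
    exact hρ.1.spectral_theorem
  set eps : Fin d → ℂ := fun i => if lam i = 0 then (0:ℂ) else 1 with heps
  have hsupp : suppProj ρ hρ.1 = U * Matrix.diagonal eps * star U := rfl
  -- the key column relation in the eigenbasis
  have h1 : Matrix.diagonal eps * star U * ρdiag
      = (c:ℂ) • (Matrix.diagonal (fun i => (lam i : ℂ)) * star U) := by
    have h := congrArg (fun X => star U * X) hprop
    simp only [hsupp, Matrix.mul_smul] at h
    rw [hspec] at h
    simp only [← Matrix.mul_assoc, hUstar, Matrix.one_mul] at h
    exact h
  have key : ∀ i j, eps i * ((star U) i j * ρ j j)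
      = (c:ℂ) * ((lam i : ℂ) * (star U) i j) := by
    intro i j
    have h := congrFun (congrFun h1 i) j
    rw [hdiag, Matrix.mul_diagonal, Matrix.diagonal_mul, Matrix.smul_apply,
      Matrix.diagonal_mul, smul_eq_mul, mul_assoc] at h
    exact h
  have hρjj : ∀ j, ρ j j = ∑ i, (lam i : ℂ) * (Complex.normSq (U j i) : ℂ) := by
    intro j
    rw [hspec]
    exact conj_entry U _ j
  set p : Fin d → ℝ := fun j => ∑ i, lam i * Complex.normSq (U j i) with hpdef
  have hρjjC : ∀ j, ρ j j = ((p j : ℝ) : ℂ) := by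
    intro j
    rw [hρjj j, hpdef]
    push_cast
    rfl
  have hpnn : ∀ j, 0 ≤ p j := fun j =>
    Finset.sum_nonneg fun i _ => mul_nonneg (hlam i) (Complex.normSq_nonneg _)
  have H1 : ∀ j i, lam i ≠ 0 → Complex.normSq (U j i) ≠ 0 → lam i * c = p j := by
    intro j i hl hn
    have hUij : U j i ≠ 0 := fun h => hn (by simp [h])
    have hsU : (star U) i j ≠ 0 := by
      rw [Matrix.star_apply]
      simpa using hUij
    have hk := key i j
    rw [heps] at hk
    simp only [if_neg hl, one_mul] at hk
    have h2 : (star U) i j * ρ j j = (star U) i j * ((c:ℂ) * (lam i : ℂ)) := by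
      rw [hk]; ring
    have h3 : ρ j j = (c:ℂ) * (lam i : ℂ) := mul_left_cancel₀ hsU h2
    rw [hρjjC j] at h3
    have h4 : (p j : ℝ) = c * lam i := by exact_mod_cast h3
    linarith [h4]
  have H2 : ∀ j, p j ≠ 0 →
      (∑ i, (if lam i = 0 then (0:ℝ) else 1) * Complex.normSq (U j i)) = c := by
    intro j hp0
    have hd := congrFun (congrFun hprop j) j
    have hPjj : (suppProj ρ hρ.1) j j = ∑ i, eps i * (Complex.normSq (U j i) : ℂ) := by
      rw [hsupp]; exact conj_entry U _ j
    rw [hdiag] at hd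
    rw [Matrix.mul_diagonal, Matrix.smul_apply, smul_eq_mul, hPjj, hρjjC j] at hd
    have hpC : ((p j : ℝ) : ℂ) ≠ 0 := by exact_mod_cast hp0
    have h5 : ∑ i, eps i * (Complex.normSq (U j i) : ℂ) = (c:ℂ) :=
      mul_right_cancel₀ hpC hd
    have h6 : ((∑ i, (if lam i = 0 then (0:ℝ) else 1) * Complex.normSq (U j i) : ℝ) : ℂ)
        = ∑ i, eps i * (Complex.normSq (U j i) : ℂ) := by
      push_cast
      refine Finset.sum_congr rfl fun i _ => ?_
      by_cases hl : lam i = 0 <;> simp [heps, hl]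
    exact_mod_cast h6.trans h5
  have hmr : ∀ j, ((mrpow ρ hρ.1 α) j j).re = c ^ (1-α) * (p j) ^ α := by
    intro j
    have e1 : (mrpow ρ hρ.1 α) j j
        = ∑ i, ((lam i ^ α : ℝ):ℂ) * (Complex.normSq (U j i) : ℂ) := conj_entry U _ j
    rw [e1, Complex.re_sum]
    have e2 : ∀ i ∈ Finset.univ,
        (((lam i ^ α:ℝ):ℂ) * ((Complex.normSq (U j i):ℝ):ℂ)).re
          = lam i ^ α * Complex.normSq (U j i) := by
      intro i _
      rw [← Complex.ofReal_mul]
      exact Complex.ofReal_re _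
    rw [Finset.sum_congr rfl e2]
    exact scalar_aux lam (fun i => Complex.normSq (U j i)) hlam
      (fun i => Complex.normSq_nonneg _) c α hc hα0 (p j) rfl (fun i => H1 j i) (H2 j)
  have hsum1 : ∑ j, p j = 1 := by
    have ht : (∑ j, ρ j j) = 1 := by
      rw [← htr]; rfl
    have ht2 := congrArg Complex.re ht
    rw [Complex.re_sum] at ht2
    simp only [hρjjC, Complex.ofReal_re] at ht2
    simpa using ht2
  have hstep : ∑ j, ((mrpow ρ hρ.1 α) j j).re ^ α⁻¹ = c ^ ((1-α) * α⁻¹) := by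
    have e3 : ∀ j ∈ Finset.univ, ((mrpow ρ hρ.1 α) j j).re ^ α⁻¹
        = c ^ ((1-α)*α⁻¹) * p j := by
      intro j _
      rw [hmr j, Real.mul_rpow (Real.rpow_nonneg hc.le _) (Real.rpow_nonneg (hpnn j) _),
        ← Real.rpow_mul hc.le, Real.rpow_rpow_inv (hpnn j) (ne_of_gt hα0)]
    rw [Finset.sum_congr rfl e3, ← Finset.mul_sum, hsum1, mul_one]
  rw [hstep, ← Real.rpow_mul hc.le]
  have hexp : (1-α)*α⁻¹*α = 1-α := by field_simp
  rw [hexp, Real.log_rpow hc]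
  have hα1' : α - 1 ≠ 0 := sub_ne_zero.mpr hα1
  field_simp
  ring
end

section
/- Let ρ be a density matrix on ℂ^d and ρ_MC := ∑_{j,k} ρ_{jk} |jj⟩⟨kk| the corresponding maximally correlated state on ℂ^d ⊗ ℂ^d. Then for any diagonal density matrix σ on ℂ^d and any α ∈ (0,∞), α ≠ 1: tr(ρ_MC^α (I ⊗ σ)^{1−α}) = tr(ρ^α σ^{1−α}) and tr[((I⊗σ)^{(1−α)/(2α)} ρ_MC (I⊗σ)^{(1−α)/(2α)})^α] = tr[(σ^{(1−α)/(2α)} ρ σ^{(1−α)/(2α)})^α]. -/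
open Matrix Finset ComplexOrder

section AuxMrpow
open Polynomial
variable {n m : Type*} [Fintype n] [DecidableEq n] [Fintype m] [DecidableEq m]

private lemma conj_pow_ne_zero (V : Matrix m n ℂ) (hV : Vᴴ * V = 1)
    (A : Matrix n n ℂ) : ∀ i : ℕ, i ≠ 0 → (V * A * Vᴴ) ^ i = V * A ^ i * Vᴴ := by
  intro i hi
  induction i with
  | zero => simp at hi
  | succ k ih =>
    rcases Nat.eq_zero_or_pos k with hk | hk
    · subst hk; simp [pow_one]
    · rw [pow_succ, ih hk.ne', pow_succ]
      have : V * A ^ k * Vᴴ * (V * A * Vᴴ) = V * A ^ k * (Vᴴ * V) * A * Vᴴ := by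
        simp only [Matrix.mul_assoc]
      rw [this, hV, Matrix.mul_one]
      simp only [Matrix.mul_assoc]

private lemma aeval_conj_coeff_zero (V : Matrix m n ℂ) (hV : Vᴴ * V = 1)
    (A : Matrix n n ℂ) (p : ℂ[X]) (hp : p.coeff 0 = 0) :
    aeval (V * A * Vᴴ) p = V * aeval A p * Vᴴ := by
  rw [aeval_eq_sum_range (V * A * Vᴴ), aeval_eq_sum_range A, Matrix.mul_sum, Matrix.sum_mul]
  refine Finset.sum_congr rfl fun i _ => ?_
  rcases Nat.eq_zero_or_pos i with h0 | h0
  · subst h0; simp [hp]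
  · rw [conj_pow_ne_zero V hV A i h0.ne', Matrix.mul_smul, Matrix.smul_mul]

private lemma aeval_unitary_conj (U : Matrix n n ℂ) (hU : Uᴴ * U = 1) (hU2 : U * Uᴴ = 1)
    (A : Matrix n n ℂ) (p : ℂ[X]) :
    aeval (U * A * Uᴴ) p = U * aeval A p * Uᴴ := by
  rw [aeval_eq_sum_range (U * A * Uᴴ), aeval_eq_sum_range A, Matrix.mul_sum, Matrix.sum_mul]
  refine Finset.sum_congr rfl fun i _ => ?_
  rcases Nat.eq_zero_or_pos i with h0 | h0
  · subst h0; simp [Matrix.mul_smul, Matrix.smul_mul, hU2]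
  · rw [conj_pow_ne_zero U hU A i h0.ne', Matrix.mul_smul, Matrix.smul_mul]

private lemma aeval_diagonal (v : n → ℂ) (p : ℂ[X]) :
    aeval (Matrix.diagonal v) p = Matrix.diagonal fun i => p.eval (v i) := by
  rw [aeval_eq_sum_range]
  ext i j
  rcases eq_or_ne i j with rfl | hij
  · have hv := aeval_eq_sum_range (p := p) (R := ℂ) (v i)
    simp only [Polynomial.aeval_def, Polynomial.eval₂_eq_eval_map, Algebra.algebraMap_self,
      Polynomial.map_id] at hv
    simp only [Matrix.diagonal_apply_eq, hv, Matrix.sum_apply]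
    refine Finset.sum_congr rfl fun k _ => ?_
    simp [Matrix.diagonal_pow, smul_eq_mul]
  · simp only [Matrix.diagonal_apply_ne _ hij, Matrix.sum_apply]
    refine Finset.sum_eq_zero fun k _ => ?_
    simp [Matrix.diagonal_pow, Matrix.diagonal_apply_ne _ hij]

private lemma mrpow_eq_aeval (A : Matrix n n ℂ) (hA : A.IsHermitian) (α : ℝ) (p : ℂ[X])
    (hp : ∀ i, p.eval ((hA.eigenvalues i : ℝ) : ℂ) = ((hA.eigenvalues i ^ α : ℝ) : ℂ)) :
    mrpow A hA α = aeval A p := by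
  have hU : (hA.eigenvectorUnitary : Matrix n n ℂ)ᴴ * hA.eigenvectorUnitary = 1 := by
    simpa [star] using (Matrix.mem_unitaryGroup_iff').mp hA.eigenvectorUnitary.2
  have hU2 : (hA.eigenvectorUnitary : Matrix n n ℂ) *
      (hA.eigenvectorUnitary : Matrix n n ℂ)ᴴ = 1 := by
    simpa [star] using (Matrix.mem_unitaryGroup_iff).mp hA.eigenvectorUnitary.2
  conv_rhs => rw [hA.spectral_theorem, Unitary.conjStarAlgAut_apply]
  rw [show (star (hA.eigenvectorUnitary : Matrix n n ℂ)) =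
      (hA.eigenvectorUnitary : Matrix n n ℂ)ᴴ from rfl,
    aeval_unitary_conj _ hU hU2, aeval_diagonal]
  unfold mrpow
  rw [show (fun i => ((hA.eigenvalues i ^ α : ℝ) : ℂ)) =
      (fun i => p.eval ((hA.eigenvalues i : ℝ) : ℂ)) from funext fun i => (hp i).symm]
  rfl

private lemma mrpow_conj (V : Matrix m n ℂ) (hV : Vᴴ * V = 1)
    (A : Matrix n n ℂ) (hA : A.IsHermitian) (hB : (V * A * Vᴴ).IsHermitian)
    (α : ℝ) (hα : α ≠ 0) :
    mrpow (V * A * Vᴴ) hB α = V * mrpow A hA α * Vᴴ := by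
  classical
  set S : Finset ℂ := insert 0 ((Finset.univ.image fun i => ((hA.eigenvalues i : ℝ) : ℂ)) ∪
    Finset.univ.image fun j => ((hB.eigenvalues j : ℝ) : ℂ)) with hS
  set r : ℂ → ℂ := fun z => ((z.re ^ α : ℝ) : ℂ) with hr
  set p := Lagrange.interpolate S id r with hpdef
  have hnode : ∀ x ∈ S, p.eval x = r x := fun x hx => by
    simpa [hpdef] using Lagrange.eval_interpolate_at_node r (Set.injOn_id _) hx
  have h0 : p.coeff 0 = 0 := by
    rw [Polynomial.coeff_zero_eq_eval_zero, hnode 0 (Finset.mem_insert_self _ _)]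
    simp [hr, Real.zero_rpow hα]
  have hAeig : ∀ i, p.eval ((hA.eigenvalues i : ℝ) : ℂ) = ((hA.eigenvalues i ^ α : ℝ) : ℂ) := by
    intro i
    rw [hnode _ (Finset.mem_insert_of_mem (Finset.mem_union_left _
      (Finset.mem_image_of_mem _ (Finset.mem_univ i))))]
    simp [hr]
  have hBeig : ∀ j, p.eval ((hB.eigenvalues j : ℝ) : ℂ) = ((hB.eigenvalues j ^ α : ℝ) : ℂ) := by
    intro j
    rw [hnode _ (Finset.mem_insert_of_mem (Finset.mem_union_right _
      (Finset.mem_image_of_mem _ (Finset.mem_univ j))))]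
    simp [hr]
  rw [mrpow_eq_aeval _ hB α p hBeig, mrpow_eq_aeval _ hA α p hAeig,
    aeval_conj_coeff_zero V hV A p h0]

private lemma mrpow_congr (M N : Matrix n n ℂ) (h : M = N) (hM : M.IsHermitian)
    (hN : N.IsHermitian) (α : ℝ) : mrpow M hM α = mrpow N hN α := by subst h; rfl

end AuxMrpow

/-- For a density matrix `ρ` with associated maximally correlated state
`ρ_MC = ∑_{j,k} ρ_{jk} |jj⟩⟨kk|` and any diagonal density matrix `σ = diag q`:
`tr(ρ_MC^α (I ⊗ σ)^{1−α}) = tr(ρ^α σ^{1−α})` and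
`tr[((I⊗σ)^{(1−α)/(2α)} ρ_MC (I⊗σ)^{(1−α)/(2α)})^α]
  = tr[(σ^{(1−α)/(2α)} ρ σ^{(1−α)/(2α)})^α]`
for all `α ∈ (0,∞)`, `α ≠ 1` (powers of the diagonal matrices taken on supports). -/
theorem renyi_maximally_correlated {d : ℕ}
    (ρ : Matrix (Fin d) (Fin d) ℂ) (hρ : ρ.PosSemidef) (htr : ρ.trace = 1)
    (q : Fin d → ℝ) (hq0 : ∀ i, 0 ≤ q i) (hq1 : ∑ i, q i = 1)
    (ρMC : Matrix (Fin d × Fin d) (Fin d × Fin d) ℂ)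
    (hMCdef : ∀ p r : Fin d × Fin d,
      ρMC p r = if p.1 = p.2 ∧ r.1 = r.2 then ρ p.1 r.1 else 0)
    (hMC : ρMC.IsHermitian)
    (α : ℝ) (hα0 : 0 < α) (hα1 : α ≠ 1)
    (h₁ : (Matrix.diagonal (fun p : Fin d × Fin d =>
            ((q p.2 ^ ((1 - α) / (2 * α)) : ℝ) : ℂ)) * ρMC *
          Matrix.diagonal (fun p : Fin d × Fin d =>
            ((q p.2 ^ ((1 - α) / (2 * α)) : ℝ) : ℂ))).IsHermitian)
    (h₂ : (Matrix.diagonal (fun j : Fin d => ((q j ^ ((1 - α) / (2 * α)) : ℝ) : ℂ)) * ρ *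
          Matrix.diagonal (fun j : Fin d =>
            ((q j ^ ((1 - α) / (2 * α)) : ℝ) : ℂ))).IsHermitian) :
    Matrix.trace (mrpow ρMC hMC α *
        Matrix.diagonal (fun p : Fin d × Fin d => ((q p.2 ^ (1 - α) : ℝ) : ℂ)))
      = Matrix.trace (mrpow ρ hρ.1 α *
          Matrix.diagonal (fun j : Fin d => ((q j ^ (1 - α) : ℝ) : ℂ))) ∧
    Matrix.trace (mrpow (Matrix.diagonal (fun p : Fin d × Fin d =>
          ((q p.2 ^ ((1 - α) / (2 * α)) : ℝ) : ℂ)) * ρMC *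
        Matrix.diagonal (fun p : Fin d × Fin d =>
          ((q p.2 ^ ((1 - α) / (2 * α)) : ℝ) : ℂ))) h₁ α)
      = Matrix.trace (mrpow (Matrix.diagonal (fun j : Fin d =>
            ((q j ^ ((1 - α) / (2 * α)) : ℝ) : ℂ)) * ρ *
          Matrix.diagonal (fun j : Fin d =>
            ((q j ^ ((1 - α) / (2 * α)) : ℝ) : ℂ))) h₂ α) := by
  classical
  set V : Matrix (Fin d × Fin d) (Fin d) ℂ :=
    fun p k => if p.1 = k ∧ p.2 = k then 1 else 0 with hVdef
  have hVp : ∀ (p : Fin d × Fin d) (k : Fin d),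
      V p k = if p.1 = p.2 then (if k = p.1 then (1 : ℂ) else 0) else 0 := by
    intro p k
    by_cases h1 : p.1 = p.2
    · by_cases h2 : k = p.1
      · have h3 : p.1 = k ∧ p.2 = k := ⟨h2.symm, h1 ▸ h2.symm⟩
        simp only [hVdef]
        rw [if_pos h3, if_pos h1, if_pos h2]
      · have h3 : ¬(p.1 = k ∧ p.2 = k) := fun hh => h2 hh.1.symm
        simp only [hVdef]
        rw [if_neg h3, if_pos h1, if_neg h2]
    · have h3 : ¬(p.1 = k ∧ p.2 = k) := fun hh => h1 (hh.1.trans hh.2.symm)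
      simp only [hVdef]
      rw [if_neg h3, if_neg h1]
  have hV : Vᴴ * V = 1 := by
    ext k l
    simp only [Matrix.mul_apply, Matrix.conjTranspose_apply, Matrix.one_apply, hVp,
      apply_ite (star : ℂ → ℂ), star_one, star_zero]
    rw [Fintype.sum_prod_type]
    rcases eq_or_ne k l with rfl | hkl
    · rw [Finset.sum_eq_single k]
      · simp
      · intro a _ ha
        rw [Finset.sum_eq_zero]
        intro b _
        rcases eq_or_ne a b with rfl | hab
        · simp [Ne.symm ha]
        · simp [hab]
      · simp
    · rw [if_neg hkl, Finset.sum_eq_zero]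
      intro a _
      rw [Finset.sum_eq_zero]
      intro b _
      rcases eq_or_ne a b with rfl | hab
      · simp only [if_pos rfl]
        by_cases hka : k = a
        · have hla : ¬ l = a := fun h => hkl (hka.trans h.symm)
          simp [hla]
        · simp [hka]
      · simp [hab]
  have hmul : ∀ (p : Fin d × Fin d) (l : Fin d),
      (V * ρ) p l = if p.1 = p.2 then ρ p.1 l else 0 := by
    intro p l
    rw [Matrix.mul_apply]
    simp only [hVp]
    by_cases h : p.1 = p.2
    · simp [h, ite_mul, Finset.sum_ite_eq']
    · simp [h]
  have hρMC : ρMC = V * ρ * Vᴴ := by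
    ext p r
    rw [hMCdef p r, Matrix.mul_apply]
    simp only [Matrix.conjTranspose_apply, hmul, hVp, apply_ite (star : ℂ → ℂ),
      star_one, star_zero]
    by_cases h1 : p.1 = p.2 <;> by_cases h2 : r.1 = r.2 <;>
      simp [h1, h2, ite_mul, mul_ite, Finset.sum_ite_eq']
  have hcomm : ∀ f : Fin d → ℂ,
      Matrix.diagonal (fun p : Fin d × Fin d => f p.2) * V = V * Matrix.diagonal f := by
    intro f
    ext p k
    rw [Matrix.diagonal_mul, Matrix.mul_diagonal]
    by_cases h : p.1 = k ∧ p.2 = k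
    · simp [hVdef, h, h.2]
    · simp [hVdef, h]
  have hcomm' : ∀ f : Fin d → ℂ,
      Vᴴ * Matrix.diagonal (fun p : Fin d × Fin d => f p.2)
        = Matrix.diagonal f * Vᴴ := by
    intro f
    ext k p
    rw [Matrix.mul_diagonal, Matrix.diagonal_mul]
    simp only [Matrix.conjTranspose_apply]
    by_cases h : p.1 = k ∧ p.2 = k
    · simp [hVdef, h, h.2]
    · simp [hVdef, h]
  have htrconj : ∀ M : Matrix (Fin d) (Fin d) ℂ,
      Matrix.trace (V * M * Vᴴ) = Matrix.trace M := by
    intro M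
    rw [Matrix.trace_mul_comm (V * M) Vᴴ, ← Matrix.mul_assoc, hV, Matrix.one_mul]
  have hα0' : α ≠ 0 := hα0.ne'
  constructor
  · have hB : (V * ρ * Vᴴ).IsHermitian := hρMC ▸ hMC
    rw [mrpow_congr _ _ hρMC hMC hB α, mrpow_conj V hV ρ hρ.1 hB α hα0']
    rw [Matrix.mul_assoc (V * mrpow ρ hρ.1 α) Vᴴ _,
      hcomm' (fun j => ((q j ^ (1 - α) : ℝ) : ℂ)), ← Matrix.mul_assoc,
      Matrix.mul_assoc V _ _]
    rw [htrconj]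
  · set D := Matrix.diagonal (fun j : Fin d => ((q j ^ ((1 - α) / (2 * α)) : ℝ) : ℂ)) with hD
    set DMC := Matrix.diagonal (fun p : Fin d × Fin d =>
      ((q p.2 ^ ((1 - α) / (2 * α)) : ℝ) : ℂ)) with hDMC
    have hkey : DMC * ρMC * DMC = V * (D * ρ * D) * Vᴴ := by
      rw [hρMC]
      calc DMC * (V * ρ * Vᴴ) * DMC
          = (DMC * V) * (ρ * (Vᴴ * DMC)) := by simp only [Matrix.mul_assoc]
        _ = (V * D) * (ρ * (D * Vᴴ)) := by
            rw [hcomm (fun j => ((q j ^ ((1 - α) / (2 * α)) : ℝ) : ℂ)),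
              hcomm' (fun j => ((q j ^ ((1 - α) / (2 * α)) : ℝ) : ℂ))]
        _ = V * (D * ρ * D) * Vᴴ := by simp only [Matrix.mul_assoc]
    have hB : (V * (D * ρ * D) * Vᴴ).IsHermitian := hkey ▸ h₁
    rw [mrpow_congr _ _ hkey h₁ hB α, mrpow_conj V hV (D * ρ * D) h₂ hB α hα0', htrconj]
end

section
/- For any density matrix ρ on ℂ^d and α ∈ [0,2], α ≠ 1, the Rényi relative entropy of coherence is bounded by the Rényi entropy of the diagonal: (1/(α−1))·ln ‖(ρ^α)^{diag}‖_{1/α} ≤ S_{1/α}(ρ^{diag}), where S_β(τ) := (1/(1−β))·ln tr(τ^β); equality holds whenever ρ is a pure state. -/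
open Matrix Finset ComplexOrder

private lemma diag_entry {d : ℕ} (U : Matrix (Fin d) (Fin d) ℂ) (c : Fin d → ℝ) (j : Fin d) :
    ((U * Matrix.diagonal (fun i => ((c i : ℝ) : ℂ)) * star U) j j).re
      = ∑ k, c k * Complex.normSq (U j k) := by
  have h : ((U * Matrix.diagonal (fun i => ((c i : ℝ) : ℂ)) * star U) j j)
      = ((∑ k, c k * Complex.normSq (U j k) : ℝ) : ℂ) := by
    push_cast
    rw [Matrix.mul_apply]
    simp only [Matrix.mul_diagonal, Matrix.star_apply, RCLike.star_def]
    congr 1; ext k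
    rw [mul_comm (U j k) _, mul_assoc, Complex.mul_conj]
  rw [h, Complex.ofReal_re]

/-- For a density matrix `ρ` and `α ∈ (0,2]`, `α ≠ 1`, the Rényi relative entropy of
coherence `C_{r,α}(ρ) = (α−1)⁻¹ ln ‖(ρ^α)^diag‖_{1/α}` is bounded above by the Rényi
entropy `S_{1/α}(ρ^diag) = (1−1/α)⁻¹ ln ∑ⱼ ρⱼⱼ^{1/α}` of the diagonal part; equality
holds whenever `ρ` is a pure state. -/
theorem renyiCoherence_le_renyiEntropy_diag {d : ℕ}
    (ρ : Matrix (Fin d) (Fin d) ℂ) (hρ : ρ.PosSemidef) (htr : ρ.trace = 1)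
    (α : ℝ) (hα0 : 0 < α) (hα2 : α ≤ 2) (hα1 : α ≠ 1) :
    (α - 1)⁻¹ * Real.log ((∑ j, ((mrpow ρ hρ.1 α) j j).re ^ α⁻¹) ^ α)
      ≤ (1 - α⁻¹)⁻¹ * Real.log (∑ j, (ρ j j).re ^ α⁻¹) ∧
    (∀ v : Fin d → ℂ, ρ = Matrix.vecMulVec v (star v) →
      (α - 1)⁻¹ * Real.log ((∑ j, ((mrpow ρ hρ.1 α) j j).re ^ α⁻¹) ^ α)
        = (1 - α⁻¹)⁻¹ * Real.log (∑ j, (ρ j j).re ^ α⁻¹)) := by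
  classical
  have hα0' : α ≠ 0 := ne_of_gt hα0
  set U : Matrix (Fin d) (Fin d) ℂ := (hρ.1.eigenvectorUnitary : Matrix (Fin d) (Fin d) ℂ)
    with hUdef
  set lam : Fin d → ℝ := hρ.1.eigenvalues with hlamdef
  have hU1 : star U * U = 1 := Matrix.mem_unitaryGroup_iff'.mp hρ.1.eigenvectorUnitary.2
  have hU2 : U * star U = 1 := Matrix.mem_unitaryGroup_iff.mp hρ.1.eigenvectorUnitary.2
  have hspec : ρ = U * Matrix.diagonal (fun i => ((lam i : ℝ) : ℂ)) * star U :=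
    hρ.1.spectral_theorem
  -- weights
  have hwrow : ∀ j, ∑ k, Complex.normSq (U j k) = 1 := by
    intro j
    have h1 : (U * star U) j j = 1 := by rw [hU2, Matrix.one_apply_eq]
    have h2 : ((∑ k, Complex.normSq (U j k) : ℝ) : ℂ) = 1 := by
      rw [← h1, Matrix.mul_apply]
      push_cast
      congr 1; ext k
      rw [Matrix.star_apply, RCLike.star_def, Complex.mul_conj]
    exact_mod_cast h2
  have hwcol : ∀ k, ∑ j, Complex.normSq (U j k) = 1 := by
    intro k
    have h1 : (star U * U) k k = 1 := by rw [hU1, Matrix.one_apply_eq]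
    have h2 : ((∑ j, Complex.normSq (U j k) : ℝ) : ℂ) = 1 := by
      rw [← h1, Matrix.mul_apply]
      push_cast
      congr 1; ext j
      rw [Matrix.star_apply, RCLike.star_def, mul_comm, Complex.mul_conj]
    exact_mod_cast h2
  have hwnn : ∀ j k, 0 ≤ Complex.normSq (U j k) := fun _ _ => Complex.normSq_nonneg _
  -- eigenvalues
  have hlamnn : ∀ k, 0 ≤ lam k := fun k => hρ.eigenvalues_nonneg k
  have hsumlam : ∑ k, lam k = 1 := by
    have h1 : ρ.trace = ∑ k, ((lam k : ℝ) : ℂ) := by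
      rw [hspec, Matrix.trace_mul_cycle, hU1, Matrix.one_mul, Matrix.trace_diagonal]
    rw [htr] at h1
    exact_mod_cast h1.symm
  have hlamle1 : ∀ k, lam k ≤ 1 := by
    intro k
    rw [← hsumlam]
    exact Finset.single_le_sum (fun i _ => hlamnn i) (mem_univ k)
  -- diagonal entries
  have hp : ∀ j, (ρ j j).re = ∑ k, lam k * Complex.normSq (U j k) := by
    intro j; rw [hspec]; exact diag_entry U lam j
  have hq : ∀ j, ((mrpow ρ hρ.1 α) j j).re = ∑ k, lam k ^ α * Complex.normSq (U j k) :=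
    fun j => diag_entry U (fun k => lam k ^ α) j
  have hpnn : ∀ j, 0 ≤ (ρ j j).re := by
    intro j; rw [hp]
    exact Finset.sum_nonneg fun k _ => mul_nonneg (hlamnn k) (hwnn j k)
  have hqnn : ∀ j, 0 ≤ ((mrpow ρ hρ.1 α) j j).re := by
    intro j; rw [hq]
    exact Finset.sum_nonneg fun k _ => mul_nonneg (Real.rpow_nonneg (hlamnn k) α) (hwnn j k)
  have hsump : ∑ j, (ρ j j).re = 1 := by
    simp_rw [hp]
    rw [Finset.sum_comm]
    simp_rw [← Finset.mul_sum, hwcol, mul_one]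
    exact hsumlam
  have hsumq : ∑ j, ((mrpow ρ hρ.1 α) j j).re = ∑ k, lam k ^ α := by
    simp_rw [hq]
    rw [Finset.sum_comm]
    simp_rw [← Finset.mul_sum, hwcol, mul_one]
  -- positivity of the two sums
  have exists_pos : ∀ f : Fin d → ℝ, (∀ j, 0 ≤ f j) → 0 < ∑ j, f j →
      0 < ∑ j, f j ^ α⁻¹ := by
    intro f hf hsum
    have h1 : ∃ j, 0 < f j := by
      by_contra h
      push_neg at h
      have : ∑ j, f j = 0 := Finset.sum_eq_zero fun j _ => le_antisymm (h j) (hf j)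
      rw [this] at hsum; exact lt_irrefl _ hsum
    obtain ⟨j0, hj0⟩ := h1
    exact lt_of_lt_of_le (Real.rpow_pos_of_pos hj0 _)
      (Finset.single_le_sum (fun i _ => Real.rpow_nonneg (hf i) _) (mem_univ j0))
  have hSRpos : 0 < ∑ j, (ρ j j).re ^ α⁻¹ :=
    exists_pos _ hpnn (by rw [hsump]; norm_num)
  have hSLpos : 0 < ∑ j, ((mrpow ρ hρ.1 α) j j).re ^ α⁻¹ := by
    refine exists_pos _ hqnn ?_
    rw [hsumq]
    have h1 : ∃ k, 0 < lam k := by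
      by_contra h
      push_neg at h
      have : ∑ k, lam k = 0 := Finset.sum_eq_zero fun k _ => le_antisymm (h k) (hlamnn k)
      rw [hsumlam] at this; norm_num at this
    obtain ⟨k0, hk0⟩ := h1
    exact lt_of_lt_of_le (Real.rpow_pos_of_pos hk0 _)
      (Finset.single_le_sum (fun i _ => Real.rpow_nonneg (hlamnn i) _) (mem_univ k0))
  have hc : (1 - α⁻¹)⁻¹ = α * (α - 1)⁻¹ := by
    have h1 : 1 - α⁻¹ = (α - 1) / α := by field_simp
    rw [h1, inv_div, div_eq_mul_inv]
  constructor
  · -- inequality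
    rw [Real.log_rpow hSLpos, hc]
    rcases lt_or_gt_of_ne hα1 with hlt | hgt
    · -- α < 1 : λ ≤ λ^α, so S_R ≤ S_L, coefficient ≤ 0
      have hpt : ∀ k, lam k ≤ lam k ^ α := by
        intro k
        rcases eq_or_lt_of_le (hlamnn k) with h | h
        · rw [← h, Real.zero_rpow hα0']
        · calc lam k = lam k ^ (1 : ℝ) := (Real.rpow_one _).symm
            _ ≤ lam k ^ α := Real.rpow_le_rpow_of_exponent_ge h (hlamle1 k) (le_of_lt hlt)
      have hpq : ∀ j, (ρ j j).re ≤ ((mrpow ρ hρ.1 α) j j).re := by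
        intro j; rw [hp, hq]
        exact Finset.sum_le_sum fun k _ => mul_le_mul_of_nonneg_right (hpt k) (hwnn j k)
      have hle : ∑ j, (ρ j j).re ^ α⁻¹ ≤ ∑ j, ((mrpow ρ hρ.1 α) j j).re ^ α⁻¹ :=
        Finset.sum_le_sum fun j _ =>
          Real.rpow_le_rpow (hpnn j) (hpq j) (inv_nonneg.mpr hα0.le)
      have hlog : Real.log (∑ j, (ρ j j).re ^ α⁻¹)
          ≤ Real.log (∑ j, ((mrpow ρ hρ.1 α) j j).re ^ α⁻¹) :=
        Real.log_le_log hSRpos hle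
      have hcoef : α * (α - 1)⁻¹ ≤ 0 :=
        mul_nonpos_of_nonneg_of_nonpos hα0.le (inv_nonpos.mpr (by linarith))
      nlinarith [mul_le_mul_of_nonpos_left hlog hcoef]
    · -- α > 1 : λ^α ≤ λ, so S_L ≤ S_R, coefficient ≥ 0
      have hpt : ∀ k, lam k ^ α ≤ lam k := by
        intro k
        rcases eq_or_lt_of_le (hlamnn k) with h | h
        · rw [← h, Real.zero_rpow hα0']
        · calc lam k ^ α ≤ lam k ^ (1 : ℝ) :=
              Real.rpow_le_rpow_of_exponent_ge h (hlamle1 k) (le_of_lt hgt)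
            _ = lam k := Real.rpow_one _
      have hpq : ∀ j, ((mrpow ρ hρ.1 α) j j).re ≤ (ρ j j).re := by
        intro j; rw [hp, hq]
        exact Finset.sum_le_sum fun k _ => mul_le_mul_of_nonneg_right (hpt k) (hwnn j k)
      have hle : ∑ j, ((mrpow ρ hρ.1 α) j j).re ^ α⁻¹ ≤ ∑ j, (ρ j j).re ^ α⁻¹ :=
        Finset.sum_le_sum fun j _ =>
          Real.rpow_le_rpow (hqnn j) (hpq j) (inv_nonneg.mpr hα0.le)
      have hlog : Real.log (∑ j, ((mrpow ρ hρ.1 α) j j).re ^ α⁻¹)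
          ≤ Real.log (∑ j, (ρ j j).re ^ α⁻¹) :=
        Real.log_le_log hSLpos hle
      have hcoef : 0 ≤ α * (α - 1)⁻¹ :=
        mul_nonneg hα0.le (inv_nonneg.mpr (by linarith))
      nlinarith [mul_le_mul_of_nonneg_left hlog hcoef]
  · -- equality for pure states
    intro v hv
    set D : Matrix (Fin d) (Fin d) ℂ := Matrix.diagonal (fun i => ((lam i : ℝ) : ℂ)) with hD
    have hrho2 : ρ * ρ = ρ := by
      have hvv : (∑ k, (starRingEnd ℂ) (v k) * v k) = 1 := by
        have h1 : ρ.trace = ∑ k, v k * (starRingEnd ℂ) (v k) := by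
          rw [hv]
          simp [Matrix.trace, Matrix.diag, Matrix.vecMulVec_apply, Pi.star_apply,
            RCLike.star_def]
        rw [htr] at h1
        simpa [mul_comm] using h1.symm
      ext i j
      rw [hv]
      simp only [Matrix.mul_apply, Matrix.vecMulVec_apply, Pi.star_apply, RCLike.star_def]
      have h2 : ∀ k, v i * (starRingEnd ℂ) (v k) * (v k * (starRingEnd ℂ) (v j))
          = ((starRingEnd ℂ) (v k) * v k) * (v i * (starRingEnd ℂ) (v j)) := fun k => by ring
      simp_rw [h2, ← Finset.sum_mul, hvv, one_mul]
    have key : ∀ A B : Matrix (Fin d) (Fin d) ℂ, U * A * star U = U * B * star U → A = B := by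
      intro A B h
      calc A = (star U * U) * A * (star U * U) := by rw [hU1]; simp
        _ = star U * (U * A * star U) * U := by simp only [Matrix.mul_assoc]
        _ = star U * (U * B * star U) * U := by rw [h]
        _ = (star U * U) * B * (star U * U) := by simp only [Matrix.mul_assoc]
        _ = B := by rw [hU1]; simp
    have e1 : ρ * ρ = U * (D * D) * star U := by
      rw [hspec]
      rw [show (U * D * star U) * (U * D * star U)
          = U * D * (star U * U) * (D * star U) from by simp only [Matrix.mul_assoc]]
      rw [hU1, Matrix.mul_one]
      simp only [Matrix.mul_assoc]
    have hDD : D * D = D := key _ _ (e1.symm.trans (hrho2.trans hspec))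
    have hlam01 : ∀ k, lam k = 0 ∨ lam k = 1 := by
      intro k
      have h3 := congrFun (congrFun hDD k) k
      rw [hD] at h3
      rw [Matrix.diagonal_mul_diagonal, Matrix.diagonal_apply_eq, Matrix.diagonal_apply_eq] at h3
      have h4 : lam k * lam k = lam k := by exact_mod_cast h3
      have h5 : lam k * (lam k - 1) = 0 := by ring_nf; linarith [h4]
      rcases mul_eq_zero.mp h5 with h | h
      · exact Or.inl h
      · exact Or.inr (by linarith [sub_eq_zero.mp h])
    have hmr : mrpow ρ hρ.1 α = ρ := by
      show U * Matrix.diagonal (fun i => ((lam i ^ α : ℝ) : ℂ)) * star U = ρ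
      have hpow : (fun i => ((lam i ^ α : ℝ) : ℂ)) = (fun i => ((lam i : ℝ) : ℂ)) := by
        funext i
        rcases hlam01 i with h | h <;> rw [h]
        · rw [Real.zero_rpow hα0']
        · rw [Real.one_rpow]
      rw [hpow, ← hspec]
    rw [hmr, Real.log_rpow hSRpos, hc]
    ring
end
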